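/- arXiv:2104.03966 — 6 statements merged into one kernel-verified Lean document; each statement's English description precedes it below -/
import Mathlib

section
/- Let (V, Y) be a random pair with V taking values in [0,∞)^d and Y ∈ {−1,+1}, p = P(Y = +1) ∈ (0,1). Assume conditional regular variation: for σ ∈ {−,+} there are nonzero Borel measures μ_σ on E, finite on Borel sets bounded away from 0 and homogeneous (μ_σ(λB) = λ^{−1}μ_σ(B) for all λ > 0 and Borel B ⊆ E), such that t·P(t^{−1}V ∈ B | Y = σ1) → μ_σ(B) as t → ∞ for every Borel B ⊆ E bounded away from 0 with μ_σ(∂B) = 0. Set Φ_σ(A) = μ_σ(C_A) and Φ = p·Φ_+ + (1−p)·Φ_−. Let g be an angular classifier and τ ∈ (0,1), and suppose the smoothness assumption holds: Φ(∂S_τ) = 0 and Φ(∂S_g^+) = Φ(∂S_g^−) = 0 (boundaries relative to S). Then as t → ∞: (a) t·P(g(V) ≠ Y, θ(V) ∈ S_τ, ‖V‖ ≥ t) → p·Φ_+(S_g^− ∩ S_τ) + (1−p)·Φ_−(S_g^+ ∩ S_τ); (b) t·P(g(V) ≠ Y, θ(V) ∉ S_τ, ‖V‖ ≥ t) → p·Φ_+(S_g^−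 \ S_τ) + (1−p)·Φ_−(S_g^+ \ S_τ); and (c) t·P(g(V) ≠ Y, ‖V‖ ≥ t) → p·Φ_+(S_g^−) + (1−p)·Φ_−(S_g^+). -/
open MeasureTheory ProbabilityTheory ENNReal Pointwise Filter Topology

noncomputable section

/-- The punctured nonnegative orthant `E = [0,∞)^d \ {0}`. -/
def Eorthant (d : ℕ) : Set (Fin d → ℝ) := {x | (∀ j, 0 ≤ x j) ∧ x ≠ 0}

/-- The sup-norm unit sphere in the nonnegative orthant. -/
def supSphere (d : ℕ) : Set (Fin d → ℝ) := {x | (∀ j, 0 ≤ x j) ∧ ‖x‖ = 1}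

/-- `S_τ = {x ∈ S : min_j x_j > τ}`. -/
def sphereTau (d : ℕ) (τ : ℝ) : Set (Fin d → ℝ) := {x ∈ supSphere d | ∀ j, τ < x j}

/-- The angle `θ(x) = x/‖x‖`. -/
def ang (d : ℕ) (x : Fin d → ℝ) : Fin d → ℝ := ‖x‖⁻¹ • x

/-- The cone `C_A = {x ∈ E : ‖x‖ ≥ 1, θ(x) ∈ A}`. -/
def coneOf (d : ℕ) (A : Set (Fin d → ℝ)) : Set (Fin d → ℝ) :=
  {x | x ∈ Eorthant d ∧ 1 ≤ ‖x‖ ∧ ang d x ∈ A}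

/-- A set is bounded away from the origin. -/
def BddAwayFromZero (d : ℕ) (B : Set (Fin d → ℝ)) : Prop :=
  ∃ ε > (0 : ℝ), ∀ x ∈ B, ε ≤ ‖x‖

/-- The boundary of `T` relative to the sphere `S`, viewed as a subset of the ambient space:
the frontier, within the subspace topology of `S`, of the trace of `T` on `S`. -/
def relBoundary (d : ℕ) (T : Set (Fin d → ℝ)) : Set (Fin d → ℝ) :=
  Subtype.val '' (frontier {y : supSphere d | (y : Fin d → ℝ) ∈ T})

/-- The unconditional angular measure `Φ = p·Φ₊ + (1−p)·Φ₋`, as a set function,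
where `Φ_σ(A) = μ_σ(C_A)`. -/
def mixAngular (d : ℕ) (p : ℝ) (μp μm : Measure (Fin d → ℝ))
    (T : Set (Fin d → ℝ)) : ℝ :=
  p * (μp (coneOf d T)).toReal + (1 - p) * (μm (coneOf d T)).toReal

namespace RiskAux

variable {d : ℕ}

/-- coordinatewise positive part -/
def posPart (d : ℕ) (x : Fin d → ℝ) : Fin d → ℝ := fun j => max (x j) 0

/-- the fattened cone over `A ⊆ S`: all points of sup-norm at least one whose
positive part has angle in `A`. -/
def fatCone (d : ℕ) (A : Set (Fin d → ℝ)) : Set (Fin d → ℝ) :=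
  {x | 1 ≤ ‖x‖ ∧ posPart d x ≠ 0 ∧ ang d (posPart d x) ∈ A}

lemma smul_set_eq_preimage {s : ℝ} (hs : s ≠ 0) (N : Set (Fin d → ℝ)) :
    s • N = (fun x : Fin d → ℝ => s⁻¹ • x) ⁻¹' N := by
  ext x
  constructor
  · rintro ⟨y, hy, rfl⟩
    simpa [inv_smul_smul₀ hs] using hy
  · intro hx
    exact ⟨s⁻¹ • x, hx, smul_inv_smul₀ hs x⟩

lemma measurableSet_smul {s : ℝ} (hs : s ≠ 0) {N : Set (Fin d → ℝ)}
    (hN : MeasurableSet N) : MeasurableSet (s • N) := by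
  rw [smul_set_eq_preimage hs]
  exact hN.preimage ((continuous_const_smul (s⁻¹ : ℝ)).measurable)

lemma measurableSet_nonneg : MeasurableSet {x : Fin d → ℝ | ∀ j, 0 ≤ x j} := by
  have h : {x : Fin d → ℝ | ∀ j, 0 ≤ x j} = ⋂ j, {x | 0 ≤ x j} := by
    ext x; simp
  rw [h]
  exact MeasurableSet.iInter fun j => measurableSet_le measurable_const (measurable_pi_apply j)

lemma measurable_ang : Measurable (ang d) := by
  have h : ang d = fun x : Fin d → ℝ => fun j => ‖x‖⁻¹ * x j := by
    funext x j; rfl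
  rw [h]
  exact measurable_pi_lambda _ fun j => (measurable_norm.inv).mul (measurable_pi_apply j)

lemma continuous_posPart : Continuous (posPart d) :=
  continuous_pi fun j => (continuous_apply j).max continuous_const

lemma measurableSet_supSphere : MeasurableSet (supSphere d) := by
  have h : supSphere d = {x : Fin d → ℝ | ∀ j, 0 ≤ x j} ∩ {x | ‖x‖ = 1} := rfl
  rw [h]
  exact measurableSet_nonneg.inter (measurable_norm (measurableSet_singleton 1))

lemma measurableSet_sphereTau (τ : ℝ) : MeasurableSet (sphereTau d τ) := by
  have h : sphereTau d τ = supSphere d ∩ ⋂ j, {x : Fin d → ℝ | τ < x j} := by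
    ext x; simp [sphereTau]
  rw [h]
  exact measurableSet_supSphere.inter (MeasurableSet.iInter fun j =>
    measurableSet_lt measurable_const (measurable_pi_apply j))

lemma isClosed_supSphere : IsClosed (supSphere d) := by
  have h : supSphere d = (⋂ j, {x : Fin d → ℝ | 0 ≤ x j}) ∩ {x | ‖x‖ = 1} := by
    ext x; simp [supSphere]
  rw [h]
  exact ((isClosed_iInter fun j => isClosed_le continuous_const (continuous_apply j))).inter
    (isClosed_eq continuous_norm continuous_const)

lemma isCompact_supSphere : IsCompact (supSphere d) := by
  have hb : Bornology.IsBounded (supSphere d) := by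
    have hsub : supSphere d ⊆ Metric.closedBall 0 1 := by
      intro x hx
      simpa [Metric.mem_closedBall, dist_zero_right] using le_of_eq hx.2
    exact Metric.isBounded_closedBall.subset hsub
  exact Metric.isCompact_of_isClosed_isBounded isClosed_supSphere hb

lemma isClosed_relBoundary (T : Set (Fin d → ℝ)) : IsClosed (relBoundary d T) := by
  have : CompactSpace (supSphere d) := isCompact_iff_compactSpace.1 isCompact_supSphere
  have hc : IsCompact (frontier {y : supSphere d | (y : Fin d → ℝ) ∈ T}) :=
    isClosed_frontier.isCompact
  exact (hc.image continuous_subtype_val).isClosed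

lemma measurableSet_coneOf {A : Set (Fin d → ℝ)} (hA : MeasurableSet A) :
    MeasurableSet (coneOf d A) := by
  have h : coneOf d A =
      ({x : Fin d → ℝ | ∀ j, 0 ≤ x j} ∩ {(0 : Fin d → ℝ)}ᶜ) ∩
        ({x | 1 ≤ ‖x‖} ∩ ang d ⁻¹' A) := by
    ext x
    simp only [coneOf, Eorthant, Set.mem_setOf_eq, Set.mem_inter_iff, Set.mem_compl_iff,
      Set.mem_singleton_iff, Set.mem_preimage]
    try tauto
  rw [h]
  exact (measurableSet_nonneg.inter (measurableSet_singleton 0).compl).inter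
    ((measurableSet_le measurable_const measurable_norm).inter (measurable_ang hA))

lemma measurableSet_fatCone {A : Set (Fin d → ℝ)} (hA : MeasurableSet A) :
    MeasurableSet (fatCone d A) := by
  have h : fatCone d A = {x : Fin d → ℝ | 1 ≤ ‖x‖} ∩
      posPart d ⁻¹' ({(0 : Fin d → ℝ)}ᶜ ∩ ang d ⁻¹' A) := by
    ext x
    simp only [fatCone, Set.mem_setOf_eq, Set.mem_inter_iff, Set.mem_preimage,
      Set.mem_compl_iff, Set.mem_singleton_iff]
  rw [h]
  exact (measurableSet_le measurable_const measurable_norm).inter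
    (continuous_posPart.measurable ((measurableSet_singleton 0).compl.inter (measurable_ang hA)))

lemma posPart_eq {x : Fin d → ℝ} (hx : ∀ j, 0 ≤ x j) : posPart d x = x :=
  funext fun j => max_eq_left (hx j)

lemma ang_smul {s : ℝ} (hs : 0 < s) (x : Fin d → ℝ) : ang d (s • x) = ang d x := by
  rcases eq_or_ne x 0 with rfl | hx
  · simp [ang]
  · have hnx : ‖x‖ ≠ 0 := norm_ne_zero_iff.2 hx
    unfold ang
    rw [norm_smul, Real.norm_eq_abs, abs_of_pos hs, mul_inv, smul_smul]
    congr 1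
    field_simp

lemma ang_mem_sphere {x : Fin d → ℝ} (hO : ∀ j, 0 ≤ x j) (hx : x ≠ 0) :
    ang d x ∈ supSphere d := by
  have hnx : ‖x‖ ≠ 0 := norm_ne_zero_iff.2 hx
  refine ⟨fun j => ?_, ?_⟩
  · have h : ang d x j = ‖x‖⁻¹ * x j := rfl
    rw [h]
    exact mul_nonneg (inv_nonneg.2 (norm_nonneg x)) (hO j)
  · rw [ang, norm_smul, Real.norm_eq_abs, abs_of_nonneg (inv_nonneg.2 (norm_nonneg x)),
      inv_mul_cancel₀ hnx]

lemma one_le_inv_mul_iff' {t a : ℝ} (ht : 0 < t) : 1 ≤ t⁻¹ * a ↔ t ≤ a := by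
  rw [← div_eq_inv_mul]
  exact one_le_div ht

lemma mem_smul_fatCone {t : ℝ} (ht : 0 < t) {x : Fin d → ℝ} (hO : ∀ j, 0 ≤ x j)
    (A : Set (Fin d → ℝ)) :
    x ∈ t • fatCone d A ↔ t ≤ ‖x‖ ∧ ang d x ∈ A := by
  rw [smul_set_eq_preimage ht.ne', Set.mem_preimage]
  have hO' : ∀ j, 0 ≤ (t⁻¹ • x) j := fun j => by
    have : (t⁻¹ • x) j = t⁻¹ * x j := rfl
    rw [this]
    exact mul_nonneg (inv_nonneg.2 ht.le) (hO j)
  have hpp : posPart d (t⁻¹ • x) = t⁻¹ • x := posPart_eq hO'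
  have hnorm : ‖t⁻¹ • x‖ = t⁻¹ * ‖x‖ := by
    rw [norm_smul, Real.norm_eq_abs, abs_of_pos (inv_pos.2 ht)]
  constructor
  · rintro ⟨h1, h2, h3⟩
    rw [hnorm, one_le_inv_mul_iff' ht] at h1
    rw [hpp, ang_smul (inv_pos.2 ht)] at h3
    exact ⟨h1, h3⟩
  · rintro ⟨h1, h2⟩
    have hx0 : x ≠ 0 := by
      intro h; rw [h, norm_zero] at h1; linarith
    refine ⟨?_, ?_, ?_⟩
    · rw [hnorm, one_le_inv_mul_iff' ht]; exact h1
    · rw [hpp]; exact smul_ne_zero (inv_ne_zero ht.ne') hx0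
    · rw [hpp, ang_smul (inv_pos.2 ht)]; exact h2

lemma coneOf_subset_fatCone (A : Set (Fin d → ℝ)) : coneOf d A ⊆ fatCone d A := by
  rintro x ⟨⟨hO, hx0⟩, h1, hang⟩
  refine ⟨h1, ?_, ?_⟩
  · rw [posPart_eq hO]; exact hx0
  · rw [posPart_eq hO]; exact hang

lemma fatCone_diff_subset (A : Set (Fin d → ℝ)) :
    fatCone d A \ coneOf d A ⊆ {x : Fin d → ℝ | ¬ ∀ j, 0 ≤ x j} ∩ {x | 1 ≤ ‖x‖} := by
  rintro x ⟨⟨h1, h2, h3⟩, hnc⟩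
  by_cases hO : ∀ j, 0 ≤ x j
  · exfalso
    apply hnc
    rw [posPart_eq hO] at h2 h3
    exact ⟨⟨hO, h2⟩, h1, h3⟩
  · exact ⟨hO, h1⟩

lemma measure_fatCone_eq (μ : Measure (Fin d → ℝ))
    (hnull : μ ({x : Fin d → ℝ | ¬ ∀ j, 0 ≤ x j} ∩ {x | 1 ≤ ‖x‖}) = 0)
    (A : Set (Fin d → ℝ)) : μ (fatCone d A) = μ (coneOf d A) := by
  refine le_antisymm ?_ (measure_mono (coneOf_subset_fatCone A))
  calc μ (fatCone d A)
      ≤ μ (coneOf d A ∪ ({x : Fin d → ℝ | ¬ ∀ j, 0 ≤ x j} ∩ {x | 1 ≤ ‖x‖})) := by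
        apply measure_mono
        intro x hx
        by_cases hc : x ∈ coneOf d A
        · exact Or.inl hc
        · exact Or.inr (fatCone_diff_subset A ⟨hx, hc⟩)
    _ ≤ μ (coneOf d A) + μ ({x : Fin d → ℝ | ¬ ∀ j, 0 ≤ x j} ∩ {x | 1 ≤ ‖x‖}) :=
        measure_union_le _ _
    _ = μ (coneOf d A) := by rw [hnull, add_zero]

lemma null_homog (μ : Measure (Fin d → ℝ))
    (hfin : ∀ B : Set (Fin d → ℝ), MeasurableSet B → BddAwayFromZero d B → μ B ≠ ⊤)
    (hhom : ∀ l : ℝ, 0 < l → ∀ B : Set (Fin d → ℝ), MeasurableSet B →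
      μ (l • B) = ENNReal.ofReal l⁻¹ * μ B)
    (φ : (Fin d → ℝ) → ℝ) (hφ : Measurable φ)
    (hφh : ∀ s : ℝ, 0 < s → ∀ x, φ (s • x) = s * φ x) (c : ℝ) (hc : c ≠ 0) :
    μ ({x | φ x = c} ∩ {x | 1 ≤ ‖x‖}) = 0 := by
  set N := {x : Fin d → ℝ | φ x = c} ∩ {x | 1 ≤ ‖x‖} with hNdef
  have hNmeas : MeasurableSet N :=
    (hφ (measurableSet_singleton c)).inter (measurableSet_le measurable_const measurable_norm)
  set s : ℕ → ℝ := fun n => 1 - 1 / (n + 2) with hsdef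
  have hbounds : ∀ n : ℕ, 1/2 ≤ s n ∧ s n ≤ 1 ∧ 0 < s n := by
    intro n
    have h2 : (0:ℝ) < (n:ℝ) + 2 := by positivity
    have h1 : (1:ℝ) / ((n:ℝ) + 2) ≤ 1 / 2 := by
      rw [div_le_div_iff₀ h2 (by norm_num : (0:ℝ) < 2)]
      nlinarith [(Nat.cast_nonneg n : (0:ℝ) ≤ (n:ℝ))]
    have h3 : (0:ℝ) < 1 / ((n:ℝ) + 2) := by positivity
    have hsn : s n = 1 - 1 / ((n:ℝ) + 2) := rfl
    refine ⟨by rw [hsn]; linarith, by rw [hsn]; linarith, by rw [hsn]; linarith⟩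
  have hs_inj : Function.Injective s := by
    intro n m hnm
    have hnm' : 1 - 1 / ((n:ℝ) + 2) = 1 - 1 / ((m:ℝ) + 2) := hnm
    have h2 : (0:ℝ) < (n:ℝ) + 2 := by positivity
    have h3 : (0:ℝ) < (m:ℝ) + 2 := by positivity
    have hdiv : (1:ℝ) / ((n:ℝ)+2) = 1 / ((m:ℝ)+2) := by linarith
    rw [div_eq_div_iff (ne_of_gt h2) (ne_of_gt h3)] at hdiv
    have : (n:ℝ) = m := by linarith
    exact_mod_cast this
  have hdisj : Pairwise (Function.onFun Disjoint fun n => s n • N) := by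
    intro n m hnm
    refine Set.disjoint_left.2 ?_
    rintro x hxn hxm
    obtain ⟨y, hy, hyx⟩ := hxn
    obtain ⟨z, hz, hzx⟩ := hxm
    have hyc : φ y = c := hy.1
    have hzc : φ z = c := hz.1
    have hyx' : s n • y = x := hyx
    have hzx' : s m • z = x := hzx
    have h1 : φ x = s n * c := by rw [← hyx', hφh _ (hbounds n).2.2, hyc]
    have h2 : φ x = s m * c := by rw [← hzx', hφh _ (hbounds m).2.2, hzc]
    have heq : s n = s m := mul_right_cancel₀ hc (h1.symm.trans h2)
    exact hnm (hs_inj heq)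
  have hmeas : ∀ n, MeasurableSet (s n • N) :=
    fun n => measurableSet_smul (hbounds n).2.2.ne' hNmeas
  have hsub : (⋃ n, s n • N) ⊆ {x : Fin d → ℝ | 1/2 ≤ ‖x‖} := by
    intro x hx
    simp only [Set.mem_iUnion, Set.mem_smul_set] at hx
    obtain ⟨n, y, hy, hyx⟩ := hx
    have h1 : (1:ℝ) ≤ ‖y‖ := hy.2
    have hb := hbounds n
    have hyx' : s n • y = x := hyx
    rw [← hyx']
    show 1/2 ≤ ‖s n • y‖
    rw [norm_smul, Real.norm_eq_abs, abs_of_pos hb.2.2]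
    nlinarith [hb.1, hb.2.2]
  have hUfin : μ (⋃ n, s n • N) ≠ ⊤ :=
    ne_top_of_le_ne_top (hfin _ (measurableSet_le measurable_const measurable_norm)
      ⟨1/2, by norm_num, fun x hx => hx⟩) (measure_mono hsub)
  by_contra hμN
  have hgei : ∀ n : ℕ, μ N ≤ μ (s n • N) := by
    intro n
    rw [hhom _ (hbounds n).2.2 _ hNmeas]
    have hb := hbounds n
    have hinv : (1:ℝ) ≤ (s n)⁻¹ := by
      have hmc : s n * (s n)⁻¹ = 1 := mul_inv_cancel₀ hb.2.2.ne'
      nlinarith [mul_le_mul_of_nonneg_right hb.2.1 (inv_pos.2 hb.2.2).le]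
    have h1 : (1:ℝ≥0∞) ≤ ENNReal.ofReal (s n)⁻¹ := by
      rw [ENNReal.one_le_ofReal]; exact hinv
    calc μ N = 1 * μ N := (one_mul _).symm
      _ ≤ ENNReal.ofReal (s n)⁻¹ * μ N := mul_le_mul_left h1 _
  have htop : (∑' _ : ℕ, μ N) = ⊤ := ENNReal.tsum_const_eq_top_of_ne_zero hμN
  have hle : (∑' _ : ℕ, μ N) ≤ μ (⋃ n, s n • N) := by
    rw [measure_iUnion hdisj hmeas]
    exact ENNReal.tsum_le_tsum hgei
  rw [htop] at hle
  exact hUfin (top_le_iff.1 hle)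

lemma null_sphere (μ : Measure (Fin d → ℝ))
    (hfin : ∀ B : Set (Fin d → ℝ), MeasurableSet B → BddAwayFromZero d B → μ B ≠ ⊤)
    (hhom : ∀ l : ℝ, 0 < l → ∀ B : Set (Fin d → ℝ), MeasurableSet B →
      μ (l • B) = ENNReal.ofReal l⁻¹ * μ B) :
    μ {x : Fin d → ℝ | ‖x‖ = 1} = 0 := by
  have h := null_homog μ hfin hhom (fun x => ‖x‖) measurable_norm
    (fun s hs x => by
      show ‖s • x‖ = s * ‖x‖
      rw [norm_smul, Real.norm_eq_abs, abs_of_pos hs]) 1 one_ne_zero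
  have he : {x : Fin d → ℝ | ‖x‖ = 1} ∩ {x | 1 ≤ ‖x‖} = {x | ‖x‖ = 1} := by
    ext x
    simp only [Set.mem_inter_iff, Set.mem_setOf_eq]
    exact ⟨fun hx => hx.1, fun hx => ⟨hx, hx.ge⟩⟩
  rwa [he] at h

lemma null_offO (μ : Measure (Fin d → ℝ))
    (hfin : ∀ B : Set (Fin d → ℝ), MeasurableSet B → BddAwayFromZero d B → μ B ≠ ⊤)
    (hhom : ∀ l : ℝ, 0 < l → ∀ B : Set (Fin d → ℝ), MeasurableSet B →
      μ (l • B) = ENNReal.ofReal l⁻¹ * μ B)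
    {Ω : Type*} [MeasurableSpace Ω] (Pr : Measure Ω)
    (V : Ω → Fin d → ℝ) (hVpos : ∀ᵐ ω ∂Pr, ∀ j, 0 ≤ V ω j)
    (P2 : Ω → Prop) (r : ℝ)
    (hRV : ∀ B : Set (Fin d → ℝ), MeasurableSet B → BddAwayFromZero d B →
      μ (frontier B) = 0 →
      Tendsto (fun t : ℝ => t * ((Pr {ω | V ω ∈ t • B ∧ P2 ω}).toReal / r)) atTop
        (𝓝 (μ B).toReal)) :
    μ ({x : Fin d → ℝ | ¬ ∀ j, 0 ≤ x j} ∩ {x | 1 ≤ ‖x‖}) = 0 := by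
  have hW : ∀ δ : ℝ, 0 < δ → μ {x : Fin d → ℝ | 1 < ‖x‖ ∧ ∃ j, x j < -δ} = 0 := by
    intro δ hδ
    set W := {x : Fin d → ℝ | 1 < ‖x‖ ∧ ∃ j, x j < -δ} with hWdef
    have hWopen : IsOpen W := by
      have h : W = {x : Fin d → ℝ | 1 < ‖x‖} ∩ ⋃ j, {x | x j < -δ} := by
        ext x; simp [hWdef]
      rw [h]
      exact (isOpen_lt continuous_const continuous_norm).inter
        (isOpen_iUnion fun j => isOpen_lt (continuous_apply j) continuous_const)
    have hfr0 : μ (frontier W) = 0 := by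
      have hsub : frontier W ⊆ {x : Fin d → ℝ | ‖x‖ = 1} ∪
          ⋃ j, ({x : Fin d → ℝ | x j = -δ} ∩ {x | 1 ≤ ‖x‖}) := by
        intro x hx
        have hcl : x ∈ closure W := hx.1
        have hnW : x ∉ W := by
          intro h
          apply hx.2
          rw [hWopen.interior_eq]
          exact h
        have hclsub : closure W ⊆ {x : Fin d → ℝ | 1 ≤ ‖x‖ ∧ ∃ j, x j ≤ -δ} := by
          apply closure_minimal
          · rintro y ⟨h1, j, hj⟩; exact ⟨h1.le, j, hj.le⟩
          · have h : {x : Fin d → ℝ | 1 ≤ ‖x‖ ∧ ∃ j, x j ≤ -δ} =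
                {x : Fin d → ℝ | 1 ≤ ‖x‖} ∩ ⋃ j, {x | x j ≤ -δ} := by
              ext x; simp
            rw [h]
            exact (isClosed_le continuous_const continuous_norm).inter
              (isClosed_iUnion_of_finite fun j =>
                isClosed_le (continuous_apply j) continuous_const)
        obtain ⟨h1, j, hj⟩ := hclsub hcl
        rcases eq_or_lt_of_le h1 with heq | hlt
        · exact Or.inl heq.symm
        · have hforall : ∀ j', -δ ≤ x j' := by
            by_contra hcon
            push_neg at hcon
            exact hnW ⟨hlt, hcon⟩
          exact Or.inr (Set.mem_iUnion.2 ⟨j, le_antisymm hj (hforall j), h1⟩)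
      refine measure_mono_null hsub (measure_union_null (null_sphere μ hfin hhom)
        (measure_iUnion_null fun j => ?_))
      exact null_homog μ hfin hhom (fun x => x j) (measurable_pi_apply j)
        (fun s hs x => rfl) (-δ) (neg_ne_zero.2 hδ.ne')
    have hWmeas := hWopen.measurableSet
    have hWbdd : BddAwayFromZero d W := ⟨1, one_pos, fun x hx => hx.1.le⟩
    have hlim := hRV W hWmeas hWbdd hfr0
    have hzero : (fun t : ℝ => t * ((Pr {ω | V ω ∈ t • W ∧ P2 ω}).toReal / r)) =ᶠ[atTop]
        fun _ => 0 := by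
      filter_upwards [eventually_gt_atTop (0:ℝ)] with t ht
      have hP : Pr {ω | V ω ∈ t • W ∧ P2 ω} = 0 := by
        refine measure_mono_null ?_ (ae_iff.1 hVpos)
        rintro ω ⟨hmem, -⟩
        obtain ⟨y, hy, hyx⟩ := hmem
        obtain ⟨j, hj⟩ := hy.2
        intro hpos
        have h1 : V ω j = t * y j := by rw [← hyx]; rfl
        have h2 : t * y j < 0 :=
          mul_neg_of_pos_of_neg ht (lt_trans hj (neg_lt_zero.2 hδ))
        have h3 := hpos j
        rw [h1] at h3
        linarith
      rw [hP]
      simp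
    have h0 : (μ W).toReal = 0 :=
      tendsto_nhds_unique ((tendsto_congr' hzero).1 hlim) tendsto_const_nhds
    exact ((ENNReal.toReal_eq_zero_iff _).1 h0).resolve_right (hfin W hWmeas hWbdd)
  have hcover : {x : Fin d → ℝ | ¬ ∀ j, 0 ≤ x j} ∩ {x | 1 ≤ ‖x‖} ⊆
      {x : Fin d → ℝ | ‖x‖ = 1} ∪
        ⋃ k : ℕ, {x : Fin d → ℝ | 1 < ‖x‖ ∧ ∃ j, x j < -(1 / (k + 1))} := by
    rintro x ⟨hneg, h1⟩
    push_neg at hneg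
    obtain ⟨j, hj⟩ := hneg
    have h1' : (1:ℝ) ≤ ‖x‖ := h1
    rcases eq_or_lt_of_le h1' with heq | hlt
    · exact Or.inl heq.symm
    · obtain ⟨k, hk⟩ := exists_nat_one_div_lt (neg_pos.2 hj)
      exact Or.inr (Set.mem_iUnion.2 ⟨k, hlt, j, by linarith⟩)
  exact measure_mono_null hcover (measure_union_null (null_sphere μ hfin hhom)
    (measure_iUnion_null fun k => hW _ (by positivity)))

lemma frontier_fatCone_subset (A : Set (Fin d → ℝ)) (hA : A ⊆ supSphere d) :
    frontier (fatCone d A) ⊆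
      ({x : Fin d → ℝ | ‖x‖ = 1} ∪ ({x : Fin d → ℝ | ¬ ∀ j, 0 ≤ x j} ∩ {x | 1 ≤ ‖x‖})) ∪
        coneOf d (Subtype.val '' frontier {y : supSphere d | (y : Fin d → ℝ) ∈ A}) := by
  intro x hx
  have hxcl : x ∈ closure (fatCone d A) := hx.1
  have hxnorm : 1 ≤ ‖x‖ :=
    closure_minimal (fun y (hy : y ∈ fatCone d A) => hy.1)
      (isClosed_le continuous_const continuous_norm) hxcl
  by_cases h1 : ‖x‖ = 1
  · exact Or.inl (Or.inl h1)
  by_cases hO : ∀ j, 0 ≤ x j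
  case neg => exact Or.inl (Or.inr ⟨hO, hxnorm⟩)
  have hx0 : x ≠ 0 := by
    intro h
    rw [h, norm_zero] at hxnorm
    linarith
  have hpp : posPart d x = x := posPart_eq hO
  have hangS : ang d x ∈ supSphere d := ang_mem_sphere hO hx0
  have hcont : ContinuousAt (fun y => ang d (posPart d y)) x := by
    have hppne : posPart d x ≠ 0 := by rw [hpp]; exact hx0
    have h2 : ContinuousAt (ang d) (posPart d x) := by
      show ContinuousAt (fun y : Fin d → ℝ => ‖y‖⁻¹ • y) (posPart d x)
      exact ((continuous_norm.continuousAt).inv₀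
        (norm_ne_zero_iff.2 hppne)).smul continuousAt_id
    exact h2.comp continuous_posPart.continuousAt
  have hmemcl : ang d x ∈ closure A := by
    have himg : (fun y => ang d (posPart d y)) '' fatCone d A ⊆ A := by
      rintro z ⟨y, hy, rfl⟩
      exact hy.2.2
    have h3 := hcont.continuousWithinAt.mem_closure_image hxcl
    have h3' : ang d x ∈ closure ((fun y => ang d (posPart d y)) '' fatCone d A) := by
      simpa [hpp] using h3
    exact closure_mono himg h3'
  have hsubcl : (⟨ang d x, hangS⟩ : supSphere d) ∈
      closure {y : supSphere d | (y : Fin d → ℝ) ∈ A} := by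
    rw [closure_subtype]
    have himg2 : Subtype.val '' {y : supSphere d | (y : Fin d → ℝ) ∈ A} = A := by
      ext z
      constructor
      · rintro ⟨y, hy, rfl⟩; exact hy
      · intro hz; exact ⟨⟨z, hA hz⟩, hz, rfl⟩
    rw [himg2]
    exact hmemcl
  have hnotint : (⟨ang d x, hangS⟩ : supSphere d) ∉
      interior {y : supSphere d | (y : Fin d → ℝ) ∈ A} := by
    intro hint
    apply hx.2
    have hnh : {y : supSphere d | (y : Fin d → ℝ) ∈ A} ∈
        𝓝 (⟨ang d x, hangS⟩ : supSphere d) := mem_interior_iff_mem_nhds.1 hint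
    rw [nhds_subtype_eq_comap, Filter.mem_comap] at hnh
    obtain ⟨U, hU, hUsub⟩ := hnh
    obtain ⟨U', hU'sub, hU'open, hxU'⟩ := mem_nhds_iff.1 hU
    have hinner : IsOpen ({z : Fin d → ℝ | z ≠ 0} ∩ ang d ⁻¹' U') := by
      have hco : ContinuousOn (ang d) {z : Fin d → ℝ | z ≠ 0} := by
        intro z hz
        have : ContinuousAt (ang d) z := by
          show ContinuousAt (fun y : Fin d → ℝ => ‖y‖⁻¹ • y) z
          exact ((continuous_norm.continuousAt).inv₀
            (norm_ne_zero_iff.2 hz)).smul continuousAt_id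
        exact this.continuousWithinAt
      exact hco.isOpen_inter_preimage isOpen_ne hU'open
    apply mem_interior.2
    refine ⟨{y : Fin d → ℝ | 1 < ‖y‖} ∩
      posPart d ⁻¹' ({z : Fin d → ℝ | z ≠ 0} ∩ ang d ⁻¹' U'), ?_, ?_, ?_⟩
    · rintro y ⟨hy1, hy2, hy3⟩
      refine ⟨hy1.le, hy2, ?_⟩
      have hangS' : ang d (posPart d y) ∈ supSphere d :=
        ang_mem_sphere (fun j => le_max_right _ _) hy2
      have hmU : (⟨ang d (posPart d y), hangS'⟩ : supSphere d) ∈ Subtype.val ⁻¹' U :=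
        hU'sub hy3
      exact hUsub hmU
    · exact (isOpen_lt continuous_const continuous_norm).inter
        (hinner.preimage continuous_posPart)
    · refine ⟨lt_of_le_of_ne hxnorm (Ne.symm h1), ?_, ?_⟩
      · rw [hpp]; exact hx0
      · rw [hpp]; exact hxU'
  exact Or.inr ⟨⟨hO, hx0⟩, hxnorm, ⟨⟨ang d x, hangS⟩, ⟨hsubcl, hnotint⟩, rfl⟩⟩

lemma coneOf_union_subset (X Y : Set (Fin d → ℝ)) :
    coneOf d (X ∪ Y) ⊆ coneOf d X ∪ coneOf d Y := by
  rintro x ⟨hE, h1, hang⟩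
  rcases hang with h | h
  · exact Or.inl ⟨hE, h1, h⟩
  · exact Or.inr ⟨hE, h1, h⟩

lemma coneOf_mono {X Y : Set (Fin d → ℝ)} (h : X ⊆ Y) : coneOf d X ⊆ coneOf d Y :=
  fun x hx => ⟨hx.1, hx.2.1, h hx.2.2⟩

lemma frontier_fatCone_null (μ : Measure (Fin d → ℝ))
    (hsph : μ {x : Fin d → ℝ | ‖x‖ = 1} = 0)
    (hoff : μ ({x : Fin d → ℝ | ¬ ∀ j, 0 ≤ x j} ∩ {x | 1 ≤ ‖x‖}) = 0)
    (A T1 T2 : Set (Fin d → ℝ)) (hA : A ⊆ supSphere d)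
    (h1 : μ (coneOf d (relBoundary d T1)) = 0)
    (h2 : μ (coneOf d (relBoundary d T2)) = 0)
    (hfr : frontier {y : supSphere d | (y : Fin d → ℝ) ∈ A} ⊆
      frontier {y : supSphere d | (y : Fin d → ℝ) ∈ T1} ∪
        frontier {y : supSphere d | (y : Fin d → ℝ) ∈ T2}) :
    μ (frontier (fatCone d A)) = 0 := by
  apply measure_mono_null (frontier_fatCone_subset A hA)
  apply measure_union_null (measure_union_null hsph hoff)
  have hsub : coneOf d (Subtype.val '' frontier {y : supSphere d | (y : Fin d → ℝ) ∈ A}) ⊆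
      coneOf d (relBoundary d T1) ∪ coneOf d (relBoundary d T2) := by
    refine (coneOf_mono ?_).trans (coneOf_union_subset _ _)
    rw [relBoundary, relBoundary, ← Set.image_union]
    exact Set.image_mono hfr
  exact measure_mono_null hsub (measure_union_null h1 h2)

lemma tendsto_mul_div {q : ℝ → ℝ} {w L : ℝ} (hw : w ≠ 0)
    (h : Tendsto (fun t : ℝ => t * (q t / w)) atTop (𝓝 L)) :
    Tendsto (fun t : ℝ => t * q t) atTop (𝓝 (w * L)) := by
  have h2 := h.const_mul w
  refine h2.congr fun t => ?_
  field_simp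
  try ring

end RiskAux

/-- Limits of the (unconditional) classification risks above level `t` for an angular
classifier `g`, under conditional regular variation and the smoothness assumption:
(a) `t·P(g(V) ≠ Y, θ(V) ∈ S_τ, ‖V‖ ≥ t) → p·Φ₊(S_g⁻ ∩ S_τ) + (1−p)·Φ₋(S_g⁺ ∩ S_τ)`,
(b) `t·P(g(V) ≠ Y, θ(V) ∉ S_τ, ‖V‖ ≥ t) → p·Φ₊(S_g⁻ \ S_τ) + (1−p)·Φ₋(S_g⁺ \ S_τ)`,
(c) `t·P(g(V) ≠ Y, ‖V‖ ≥ t) → p·Φ₊(S_g⁻) + (1−p)·Φ₋(S_g⁺)`. -/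
theorem limit_classification_risk (d : ℕ) (hd : 1 ≤ d)
    {Ω : Type*} [MeasurableSpace Ω] (Pr : Measure Ω) [IsProbabilityMeasure Pr]
    (V : Ω → Fin d → ℝ) (Y : Ω → ℝ) (hV : Measurable V) (hY : Measurable Y)
    (hVpos : ∀ᵐ ω ∂Pr, ∀ j, 0 ≤ V ω j)
    (hYpm : ∀ᵐ ω ∂Pr, Y ω = 1 ∨ Y ω = -1)
    (p : ℝ) (hp : p = (Pr {ω | Y ω = 1}).toReal) (hp0 : 0 < p) (hp1 : p < 1)
    (μp μm : Measure (Fin d → ℝ)) (hμp0 : μp ≠ 0) (hμm0 : μm ≠ 0)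
    (hμpfin : ∀ B : Set (Fin d → ℝ), MeasurableSet B → BddAwayFromZero d B → μp B ≠ ⊤)
    (hμmfin : ∀ B : Set (Fin d → ℝ), MeasurableSet B → BddAwayFromZero d B → μm B ≠ ⊤)
    (hμphom : ∀ l : ℝ, 0 < l → ∀ B : Set (Fin d → ℝ), MeasurableSet B →
      μp (l • B) = ENNReal.ofReal l⁻¹ * μp B)
    (hμmhom : ∀ l : ℝ, 0 < l → ∀ B : Set (Fin d → ℝ), MeasurableSet B →
      μm (l • B) = ENNReal.ofReal l⁻¹ * μm B)
    -- conditional regular variation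
    (hRVp : ∀ B : Set (Fin d → ℝ), MeasurableSet B → BddAwayFromZero d B →
      μp (frontier B) = 0 →
      Tendsto (fun t : ℝ =>
          t * ((Pr {ω | V ω ∈ t • B ∧ Y ω = 1}).toReal / (Pr {ω | Y ω = 1}).toReal))
        atTop (𝓝 (μp B).toReal))
    (hRVm : ∀ B : Set (Fin d → ℝ), MeasurableSet B → BddAwayFromZero d B →
      μm (frontier B) = 0 →
      Tendsto (fun t : ℝ =>
          t * ((Pr {ω | V ω ∈ t • B ∧ Y ω = -1}).toReal / (Pr {ω | Y ω = -1}).toReal))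
        atTop (𝓝 (μm B).toReal))
    -- angular classifier
    (g : (Fin d → ℝ) → ℝ) (hg : Measurable g)
    (hgpm : ∀ x ∈ Eorthant d, g x = 1 ∨ g x = -1)
    (hgang : ∀ x ∈ Eorthant d, g x = g (ang d x))
    (τ : ℝ) (hτ0 : 0 < τ) (hτ1 : τ < 1)
    -- smoothness assumption (boundaries relative to the sphere)
    (hsm1 : mixAngular d p μp μm (relBoundary d (sphereTau d τ)) = 0)
    (hsm2 : mixAngular d p μp μm (relBoundary d {x ∈ supSphere d | g x = 1}) = 0)
    (hsm3 : mixAngular d p μp μm (relBoundary d {x ∈ supSphere d | g x = -1}) = 0) :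
    -- (a)
    Tendsto (fun t : ℝ =>
        t * (Pr {ω | g (V ω) ≠ Y ω ∧ ang d (V ω) ∈ sphereTau d τ ∧ t ≤ ‖V ω‖}).toReal)
      atTop (𝓝 (p * (μp (coneOf d ({x ∈ supSphere d | g x = -1} ∩ sphereTau d τ))).toReal
        + (1 - p) * (μm (coneOf d ({x ∈ supSphere d | g x = 1} ∩ sphereTau d τ))).toReal)) ∧
    -- (b)
    Tendsto (fun t : ℝ =>
        t * (Pr {ω | g (V ω) ≠ Y ω ∧ ang d (V ω) ∉ sphereTau d τ ∧ t ≤ ‖V ω‖}).toReal)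
      atTop (𝓝 (p * (μp (coneOf d ({x ∈ supSphere d | g x = -1} \ sphereTau d τ))).toReal
        + (1 - p) * (μm (coneOf d ({x ∈ supSphere d | g x = 1} \ sphereTau d τ))).toReal)) ∧
    -- (c)
    Tendsto (fun t : ℝ =>
        t * (Pr {ω | g (V ω) ≠ Y ω ∧ t ≤ ‖V ω‖}).toReal)
      atTop (𝓝 (p * (μp (coneOf d {x ∈ supSphere d | g x = -1})).toReal
        + (1 - p) * (μm (coneOf d {x ∈ supSphere d | g x = 1})).toReal)) := by
  classical
  have hY1meas : MeasurableSet {ω | Y ω = 1} := hY (measurableSet_singleton 1)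
  have hY2meas : MeasurableSet {ω | Y ω = -1} := hY (measurableSet_singleton (-1))
  have hq : (Pr {ω | Y ω = -1}).toReal = 1 - p := by
    have hdisj : Disjoint {ω | Y ω = 1} {ω | Y ω = -1} := by
      rw [Set.disjoint_left]
      intro ω h1 h2
      have h1' : Y ω = 1 := h1
      have h2' : Y ω = -1 := h2
      have h3 : (1:ℝ) = -1 := h1'.symm.trans h2'
      norm_num at h3
    have huniv : (Set.univ : Set Ω) =ᵐ[Pr]
        (({ω | Y ω = 1} ∪ {ω | Y ω = -1} : Set Ω)) := by
      rw [Filter.eventuallyEq_set]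
      filter_upwards [hYpm] with ω hω
      simp only [Set.mem_univ, Set.mem_union, Set.mem_setOf_eq, true_iff]
      exact hω
    have h1 : Pr {ω | Y ω = 1} + Pr {ω | Y ω = -1} = 1 := by
      rw [← measure_union hdisj hY2meas, ← measure_congr huniv, measure_univ]
    have h2 := congrArg ENNReal.toReal h1
    rw [ENNReal.toReal_add (measure_ne_top _ _) (measure_ne_top _ _)] at h2
    simp only [ENNReal.toReal_one] at h2
    rw [← hp] at h2
    linarith
  have hp_ne : (Pr {ω | Y ω = 1}).toReal ≠ 0 := by
    rw [← hp]; exact hp0.ne'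
  have hq_ne : (Pr {ω | Y ω = -1}).toReal ≠ 0 := by
    rw [hq]; intro h; linarith
  -- null sets
  have hsphp := RiskAux.null_sphere μp hμpfin hμphom
  have hsphm := RiskAux.null_sphere μm hμmfin hμmhom
  have hoffp := RiskAux.null_offO μp hμpfin hμphom Pr V hVpos (fun ω => Y ω = 1)
    (Pr {ω | Y ω = 1}).toReal hRVp
  have hoffm := RiskAux.null_offO μm hμmfin hμmhom Pr V hVpos (fun ω => Y ω = -1)
    (Pr {ω | Y ω = -1}).toReal hRVm
  -- relBoundary cones are null
  have hrel : ∀ T : Set (Fin d → ℝ), mixAngular d p μp μm (relBoundary d T) = 0 →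
      μp (coneOf d (relBoundary d T)) = 0 ∧ μm (coneOf d (relBoundary d T)) = 0 := by
    intro T hmix
    have hclosed := RiskAux.isClosed_relBoundary (d := d) T
    have hmeas : MeasurableSet (coneOf d (relBoundary d T)) :=
      RiskAux.measurableSet_coneOf hclosed.measurableSet
    have hbdd : BddAwayFromZero d (coneOf d (relBoundary d T)) :=
      ⟨1, one_pos, fun x hx => hx.2.1⟩
    unfold mixAngular at hmix
    have ha := ENNReal.toReal_nonneg (a := μp (coneOf d (relBoundary d T)))
    have hb := ENNReal.toReal_nonneg (a := μm (coneOf d (relBoundary d T)))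
    have hna : 0 ≤ p * (μp (coneOf d (relBoundary d T))).toReal := mul_nonneg hp0.le ha
    have hnb : 0 ≤ (1 - p) * (μm (coneOf d (relBoundary d T))).toReal :=
      mul_nonneg (by linarith) hb
    have hpa : p * (μp (coneOf d (relBoundary d T))).toReal = 0 := by linarith
    have hpb : (1 - p) * (μm (coneOf d (relBoundary d T))).toReal = 0 := by linarith
    have ha0 : (μp (coneOf d (relBoundary d T))).toReal = 0 :=
      (mul_eq_zero.1 hpa).resolve_left hp0.ne'
    have hb0 : (μm (coneOf d (relBoundary d T))).toReal = 0 :=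
      (mul_eq_zero.1 hpb).resolve_left (by intro h; linarith)
    constructor
    · exact ((ENNReal.toReal_eq_zero_iff _).1 ha0).resolve_right (hμpfin _ hmeas hbdd)
    · exact ((ENNReal.toReal_eq_zero_iff _).1 hb0).resolve_right (hμmfin _ hmeas hbdd)
  obtain ⟨hT1p, hT1m⟩ := hrel _ hsm1
  obtain ⟨hT2p, hT2m⟩ := hrel _ hsm2
  obtain ⟨hT3p, hT3m⟩ := hrel _ hsm3
  -- the main building block
  have final : ∀ Q : (Fin d → ℝ) → Prop, MeasurableSet {x | Q x} →
      μp (frontier (RiskAux.fatCone d {x | x ∈ supSphere d ∧ g x = -1 ∧ Q x})) = 0 →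
      μm (frontier (RiskAux.fatCone d {x | x ∈ supSphere d ∧ g x = 1 ∧ Q x})) = 0 →
      Tendsto (fun t : ℝ =>
          t * (Pr {ω | g (V ω) ≠ Y ω ∧ Q (ang d (V ω)) ∧ t ≤ ‖V ω‖}).toReal) atTop
        (𝓝 (p * (μp (coneOf d {x | x ∈ supSphere d ∧ g x = -1 ∧ Q x})).toReal +
          (1 - p) * (μm (coneOf d {x | x ∈ supSphere d ∧ g x = 1 ∧ Q x})).toReal)) := by
    intro Q hQmeas hfm hfp
    set Am := {x : Fin d → ℝ | x ∈ supSphere d ∧ g x = -1 ∧ Q x} with hAmdef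
    set Ap := {x : Fin d → ℝ | x ∈ supSphere d ∧ g x = 1 ∧ Q x} with hApdef
    have hAmmeas : MeasurableSet Am := by
      have h : Am = supSphere d ∩ (g ⁻¹' {-1} ∩ {x | Q x}) := by
        ext x
        simp only [hAmdef, Set.mem_setOf_eq, Set.mem_inter_iff, Set.mem_preimage,
          Set.mem_singleton_iff]
        try tauto
      rw [h]
      exact RiskAux.measurableSet_supSphere.inter
        ((hg (measurableSet_singleton _)).inter hQmeas)
    have hApmeas : MeasurableSet Ap := by
      have h : Ap = supSphere d ∩ (g ⁻¹' {1} ∩ {x | Q x}) := by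
        ext x
        simp only [hApdef, Set.mem_setOf_eq, Set.mem_inter_iff, Set.mem_preimage,
          Set.mem_singleton_iff]
        try tauto
      rw [h]
      exact RiskAux.measurableSet_supSphere.inter
        ((hg (measurableSet_singleton _)).inter hQmeas)
    have hBm := RiskAux.measurableSet_fatCone (d := d) hAmmeas
    have hBp := RiskAux.measurableSet_fatCone (d := d) hApmeas
    have hBmbdd : BddAwayFromZero d (RiskAux.fatCone d Am) := ⟨1, one_pos, fun x hx => hx.1⟩
    have hBpbdd : BddAwayFromZero d (RiskAux.fatCone d Ap) := ⟨1, one_pos, fun x hx => hx.1⟩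
    have h1 := hRVp _ hBm hBmbdd hfm
    have h2 := hRVm _ hBp hBpbdd hfp
    rw [RiskAux.measure_fatCone_eq μp hoffp Am] at h1
    rw [RiskAux.measure_fatCone_eq μm hoffm Ap] at h2
    have htm := RiskAux.tendsto_mul_div hp_ne h1
    have htp := RiskAux.tendsto_mul_div hq_ne h2
    rw [← hp] at htm
    rw [hq] at htp
    have hsum := htm.add htp
    refine Filter.Tendsto.congr' ?_ hsum
    filter_upwards [eventually_ge_atTop (1:ℝ)] with t ht
    have ht0 : (0:ℝ) < t := lt_of_lt_of_le one_pos ht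
    have hEm : MeasurableSet {ω | V ω ∈ t • RiskAux.fatCone d Am ∧ Y ω = 1} :=
      (hV (RiskAux.measurableSet_smul ht0.ne' hBm)).inter hY1meas
    have hEp : MeasurableSet {ω | V ω ∈ t • RiskAux.fatCone d Ap ∧ Y ω = -1} :=
      (hV (RiskAux.measurableSet_smul ht0.ne' hBp)).inter hY2meas
    have hdisjE : Disjoint {ω | V ω ∈ t • RiskAux.fatCone d Am ∧ Y ω = 1}
        {ω | V ω ∈ t • RiskAux.fatCone d Ap ∧ Y ω = -1} := by
      rw [Set.disjoint_left]
      rintro ω ⟨-, hy1⟩ ⟨-, hy2⟩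
      have h3 : (1:ℝ) = -1 := hy1.symm.trans hy2
      norm_num at h3
    have hae : ({ω | g (V ω) ≠ Y ω ∧ Q (ang d (V ω)) ∧ t ≤ ‖V ω‖} : Set Ω) =ᵐ[Pr]
        (({ω | V ω ∈ t • RiskAux.fatCone d Am ∧ Y ω = 1} ∪
          {ω | V ω ∈ t • RiskAux.fatCone d Ap ∧ Y ω = -1} : Set Ω)) := by
      rw [Filter.eventuallyEq_set]
      filter_upwards [hVpos, hYpm] with ω hVω hYω
      simp only [Set.mem_setOf_eq, Set.mem_union]
      rw [RiskAux.mem_smul_fatCone ht0 hVω, RiskAux.mem_smul_fatCone ht0 hVω]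
      constructor
      · rintro ⟨hne, hQa, hle⟩
        have hx0 : V ω ≠ 0 := by
          intro h
          rw [h, norm_zero] at hle
          linarith
        have hxE : V ω ∈ Eorthant d := ⟨hVω, hx0⟩
        have hangm := hgang _ hxE
        have hangS := RiskAux.ang_mem_sphere hVω hx0
        rcases hYω with hY1 | hY1
        · left
          refine ⟨⟨hle, hangS, ?_, hQa⟩, hY1⟩
          rcases hgpm _ hxE with hgx | hgx
          · exact absurd (by rw [hgx, hY1] : g (V ω) = Y ω) hne
          · rw [← hangm]; exact hgx
        · right
          refine ⟨⟨hle, hangS, ?_, hQa⟩, hY1⟩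
          rcases hgpm _ hxE with hgx | hgx
          · rw [← hangm]; exact hgx
          · exact absurd (by rw [hgx, hY1] : g (V ω) = Y ω) hne
      · rintro (⟨⟨hle, hangS, hgm, hQa⟩, hY1⟩ | ⟨⟨hle, hangS, hgm, hQa⟩, hY1⟩) <;>
        · have hx0 : V ω ≠ 0 := by
            intro h
            rw [h, norm_zero] at hle
            linarith
          have hxE : V ω ∈ Eorthant d := ⟨hVω, hx0⟩
          refine ⟨?_, hQa, hle⟩
          rw [hgang _ hxE, hgm, hY1]
          norm_num
    show t * (Pr {ω | V ω ∈ t • RiskAux.fatCone d Am ∧ Y ω = 1}).toReal +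
        t * (Pr {ω | V ω ∈ t • RiskAux.fatCone d Ap ∧ Y ω = -1}).toReal =
        t * (Pr {ω | g (V ω) ≠ Y ω ∧ Q (ang d (V ω)) ∧ t ≤ ‖V ω‖}).toReal
    rw [measure_congr hae, measure_union hdisjE hEp,
      ENNReal.toReal_add (measure_ne_top _ _) (measure_ne_top _ _)]
    ring
  -- frontier-null facts for the six fat cones
  have hfrnull : ∀ (σ : ℝ) (Q : (Fin d → ℝ) → Prop) (μ : Measure (Fin d → ℝ)),
      μ {x : Fin d → ℝ | ‖x‖ = 1} = 0 →
      μ ({x : Fin d → ℝ | ¬ ∀ j, 0 ≤ x j} ∩ {x | 1 ≤ ‖x‖}) = 0 →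
      μ (coneOf d (relBoundary d {x ∈ supSphere d | g x = σ})) = 0 →
      μ (coneOf d (relBoundary d (sphereTau d τ))) = 0 →
      (∀ y : supSphere d, Q (y : Fin d → ℝ) ↔ (y : Fin d → ℝ) ∈ sphereTau d τ) ∨
        (∀ y : supSphere d, Q (y : Fin d → ℝ) ↔ (y : Fin d → ℝ) ∉ sphereTau d τ) ∨
        (∀ y : supSphere d, Q (y : Fin d → ℝ) ↔ True) →
      μ (frontier (RiskAux.fatCone d {x | x ∈ supSphere d ∧ g x = σ ∧ Q x})) = 0 := by
    intro σ Q μ hsph hoff hg0 ht0 hQc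
    have hAsub : {x | x ∈ supSphere d ∧ g x = σ ∧ Q x} ⊆ supSphere d := fun x hx => hx.1
    refine RiskAux.frontier_fatCone_null μ hsph hoff _
      {x ∈ supSphere d | g x = σ} (sphereTau d τ) hAsub hg0 ht0 ?_
    have hgy : {y : supSphere d | (y : Fin d → ℝ) ∈ {x ∈ supSphere d | g x = σ ∧ Q x}} =
        {y : supSphere d | (y : Fin d → ℝ) ∈ {x ∈ supSphere d | g x = σ}} ∩
          {y : supSphere d | Q (y : Fin d → ℝ)} := by
      ext y
      have h2 := y.2
      simp only [Set.mem_setOf_eq, Set.mem_inter_iff]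
      tauto
    rcases hQc with hc | hc | hc
    · have hQy : {y : supSphere d | Q (y : Fin d → ℝ)} =
          {y : supSphere d | (y : Fin d → ℝ) ∈ sphereTau d τ} := by
        ext y; simp only [Set.mem_setOf_eq, hc y]
      rw [hgy, hQy]
      refine (frontier_inter_subset _ _).trans ?_
      exact Set.union_subset_union Set.inter_subset_left Set.inter_subset_right
    · have hQy : {y : supSphere d | Q (y : Fin d → ℝ)} =
          {y : supSphere d | (y : Fin d → ℝ) ∈ sphereTau d τ}ᶜ := by
        ext y; simp only [Set.mem_setOf_eq, Set.mem_compl_iff, hc y]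
      rw [hgy, hQy]
      refine (frontier_inter_subset _ _).trans ?_
      refine Set.union_subset_union Set.inter_subset_left ?_
      refine Set.inter_subset_right.trans ?_
      rw [frontier_compl]
    · have hQy : {y : supSphere d | Q (y : Fin d → ℝ)} = (Set.univ : Set (supSphere d)) := by
        ext y; simp only [Set.mem_setOf_eq, Set.mem_univ, hc y]
      rw [hgy, hQy, Set.inter_univ]
      exact fun z hz => Or.inl hz
  -- part (a)
  have hQa : ∀ y : supSphere d, ((y : Fin d → ℝ) ∈ sphereTau d τ) ↔
      (y : Fin d → ℝ) ∈ sphereTau d τ := fun y => Iff.rfl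
  have hfa_m := hfrnull (-1) (fun x => x ∈ sphereTau d τ) μp hsphp hoffp hT3p hT1p
    (Or.inl fun y => Iff.rfl)
  have hfa_p := hfrnull 1 (fun x => x ∈ sphereTau d τ) μm hsphm hoffm hT2m hT1m
    (Or.inl fun y => Iff.rfl)
  have hQameas : MeasurableSet {x : Fin d → ℝ | x ∈ sphereTau d τ} := by
    rw [Set.setOf_mem_eq]
    exact RiskAux.measurableSet_sphereTau τ
  have hparta := final (fun x => x ∈ sphereTau d τ) hQameas hfa_m hfa_p
  have ema : {x : Fin d → ℝ | x ∈ supSphere d ∧ g x = -1 ∧ x ∈ sphereTau d τ} =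
      {x ∈ supSphere d | g x = -1} ∩ sphereTau d τ := by
    ext x
    simp only [Set.mem_setOf_eq, Set.mem_inter_iff]
    tauto
  have epa : {x : Fin d → ℝ | x ∈ supSphere d ∧ g x = 1 ∧ x ∈ sphereTau d τ} =
      {x ∈ supSphere d | g x = 1} ∩ sphereTau d τ := by
    ext x
    simp only [Set.mem_setOf_eq, Set.mem_inter_iff]
    tauto
  rw [ema, epa] at hparta
  -- part (b)
  have hfb_m := hfrnull (-1) (fun x => x ∉ sphereTau d τ) μp hsphp hoffp hT3p hT1p
    (Or.inr (Or.inl fun y => Iff.rfl))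
  have hfb_p := hfrnull 1 (fun x => x ∉ sphereTau d τ) μm hsphm hoffm hT2m hT1m
    (Or.inr (Or.inl fun y => Iff.rfl))
  have hQbmeas : MeasurableSet {x : Fin d → ℝ | x ∉ sphereTau d τ} :=
    (RiskAux.measurableSet_sphereTau τ).compl
  have hpartb := final (fun x => x ∉ sphereTau d τ) hQbmeas hfb_m hfb_p
  have emb : {x : Fin d → ℝ | x ∈ supSphere d ∧ g x = -1 ∧ x ∉ sphereTau d τ} =
      {x ∈ supSphere d | g x = -1} \ sphereTau d τ := by
    ext x
    simp only [Set.mem_setOf_eq, Set.mem_diff]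
    tauto
  have epb : {x : Fin d → ℝ | x ∈ supSphere d ∧ g x = 1 ∧ x ∉ sphereTau d τ} =
      {x ∈ supSphere d | g x = 1} \ sphereTau d τ := by
    ext x
    simp only [Set.mem_setOf_eq, Set.mem_diff]
    tauto
  rw [emb, epb] at hpartb
  -- part (c)
  have hfc_m := hfrnull (-1) (fun _ => True) μp hsphp hoffp hT3p hT1p
    (Or.inr (Or.inr fun y => Iff.rfl))
  have hfc_p := hfrnull 1 (fun _ => True) μm hsphm hoffm hT2m hT1m
    (Or.inr (Or.inr fun y => Iff.rfl))
  have hpartc := final (fun _ => True) MeasurableSet.univ hfc_m hfc_p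
  have emc : {x : Fin d → ℝ | x ∈ supSphere d ∧ g x = -1 ∧ True} =
      {x ∈ supSphere d | g x = -1} := by
    ext x
    simp only [Set.mem_setOf_eq, and_true]
  have epc : {x : Fin d → ℝ | x ∈ supSphere d ∧ g x = 1 ∧ True} =
      {x ∈ supSphere d | g x = 1} := by
    ext x
    simp only [Set.mem_setOf_eq, and_true]
  rw [emc, epc] at hpartc
  have hfunc : (fun t : ℝ => t * (Pr {ω | g (V ω) ≠ Y ω ∧ t ≤ ‖V ω‖}).toReal) =
      (fun t : ℝ => t * (Pr {ω | g (V ω) ≠ Y ω ∧ True ∧ t ≤ ‖V ω‖}).toReal) := by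
    funext t
    have h : {ω | g (V ω) ≠ Y ω ∧ t ≤ ‖V ω‖} =
        {ω | g (V ω) ≠ Y ω ∧ True ∧ t ≤ ‖V ω‖} := by
      ext ω; simp
    rw [h]
  refine ⟨hparta, hpartb, ?_⟩
  rw [hfunc]
  exact hpartc
end
end

section
/- Let ν, π and μ be measures on a measurable space, and let Γ⁻, Γ⁺, G and C be measurable sets with Γ⁻ ⊆ G ⊆ Γ⁺ and Γ⁻ ⊆ C ⊆ Γ⁺, and suppose ν(Γ⁺), π(Γ⁺) and μ(Γ⁺) are all finite. Then |ν(G) − μ(C)| ≤ max_{B ∈ {Γ⁻, Γ⁺}} |π(B) − μ(B)| + max_{B ∈ {Γ⁻, Γ⁺}} |ν(B) − π(B)| + μ(Γ⁺ \ Γ⁻). -/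
open MeasureTheory

/-- Generic bias / stochastic-error / framing-gap decomposition.
Let `ν, π, μ` be measures, and `Γ⁻ ⊆ G ⊆ Γ⁺`, `Γ⁻ ⊆ C ⊆ Γ⁺` measurable sets with
`ν(Γ⁺), π(Γ⁺), μ(Γ⁺)` finite.  Then
`|ν(G) − μ(C)| ≤ max_{B ∈ {Γ⁻,Γ⁺}} |π(B) − μ(B)| + max_{B ∈ {Γ⁻,Γ⁺}} |ν(B) − π(B)|
 + μ(Γ⁺ \ Γ⁻)`. -/
theorem framing_decomposition {Ω : Type*} [MeasurableSpace Ω]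
    (ν π μ : Measure Ω) (Γm Γp G C : Set Ω)
    (hΓm : MeasurableSet Γm) (hΓp : MeasurableSet Γp)
    (hG : MeasurableSet G) (hC : MeasurableSet C)
    (hmG : Γm ⊆ G) (hGp : G ⊆ Γp) (hmC : Γm ⊆ C) (hCp : C ⊆ Γp)
    (hν : ν Γp ≠ ⊤) (hπ : π Γp ≠ ⊤) (hμ : μ Γp ≠ ⊤) :
    |(ν G).toReal - (μ C).toReal| ≤
      max |(π Γm).toReal - (μ Γm).toReal| |(π Γp).toReal - (μ Γp).toReal|
      + max |(ν Γm).toReal - (π Γm).toReal| |(ν Γp).toReal - (π Γp).toReal|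
      + (μ (Γp \ Γm)).toReal := by
  have hmp : Γm ⊆ Γp := hmG.trans hGp
  have hνG : ν G ≠ ⊤ := fun h => hν (top_le_iff.mp (h ▸ measure_mono hGp))
  have hνm : ν Γm ≠ ⊤ := fun h => hν (top_le_iff.mp (h ▸ measure_mono hmp))
  have hμC : μ C ≠ ⊤ := fun h => hμ (top_le_iff.mp (h ▸ measure_mono hCp))
  have hμm : μ Γm ≠ ⊤ := fun h => hμ (top_le_iff.mp (h ▸ measure_mono hmp))
  have h1 : (ν Γm).toReal ≤ (ν G).toReal := ENNReal.toReal_mono hνG (measure_mono hmG)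
  have h2 : (ν G).toReal ≤ (ν Γp).toReal := ENNReal.toReal_mono hν (measure_mono hGp)
  have h3 : (μ Γm).toReal ≤ (μ C).toReal := ENNReal.toReal_mono hμC (measure_mono hmC)
  have h4 : (μ C).toReal ≤ (μ Γp).toReal := ENNReal.toReal_mono hμ (measure_mono hCp)
  have hdiff : (μ (Γp \ Γm)).toReal = (μ Γp).toReal - (μ Γm).toReal := by
    rw [measure_diff hmp hΓm.nullMeasurableSet hμm, ENNReal.toReal_sub_of_le (measure_mono hmp) hμ]
  have e1 : (π Γm).toReal - (μ Γm).toReal ≤ max |(π Γm).toReal - (μ Γm).toReal| |(π Γp).toReal - (μ Γp).toReal| :=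
    (le_abs_self _).trans (le_max_left _ _)
  have e1' : (μ Γp).toReal - (π Γp).toReal ≤ max |(π Γm).toReal - (μ Γm).toReal| |(π Γp).toReal - (μ Γp).toReal| :=
    (neg_le_abs _).trans_eq' (by ring_nf) |>.trans (le_max_right _ _)
  have e2 : (π Γp).toReal - (μ Γp).toReal ≤ max |(π Γm).toReal - (μ Γm).toReal| |(π Γp).toReal - (μ Γp).toReal| :=
    (le_abs_self _).trans (le_max_right _ _)
  have e2' : (μ Γm).toReal - (π Γm).toReal ≤ max |(π Γm).toReal - (μ Γm).toReal| |(π Γp).toReal - (μ Γp).toReal| :=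
    (neg_le_abs _).trans_eq' (by ring_nf) |>.trans (le_max_left _ _)
  have f1 : (ν Γp).toReal - (π Γp).toReal ≤ max |(ν Γm).toReal - (π Γm).toReal| |(ν Γp).toReal - (π Γp).toReal| :=
    (le_abs_self _).trans (le_max_right _ _)
  have f2 : (π Γm).toReal - (ν Γm).toReal ≤ max |(ν Γm).toReal - (π Γm).toReal| |(ν Γp).toReal - (π Γp).toReal| :=
    (neg_le_abs _).trans_eq' (by ring_nf) |>.trans (le_max_left _ _)
  rw [abs_le, hdiff]
  constructor <;> nlinarith [e1, e1', e2, e2', f1, f2, h1, h2, h3, h4]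
end

section
/- Let d ≥ 1, let Φ be a finite Borel measure on S = {x ∈ [0,∞)^d : max_j x_j = 1} with Φ(S) > 0, and let μ be the polar-defined measure on E = [0,∞)^d \ {0}, μ(B) = ∫_0^∞ Φ({θ ∈ S : rθ ∈ B}) r^{−2} dr. Let D ⊆ [1,∞) × S be a Borel set whose slices D_r = {θ ∈ S : (r, θ) ∈ D} satisfy Φ(D_r) ≤ a·r for all r ≥ 1, where 0 < a ≤ Φ(S). Then μ({x ∈ E : ‖x‖ ≥ 1, (‖x‖, x/‖x‖) ∈ D}) ≤ a·(1 + log(Φ(S)/a)). -/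
open MeasureTheory ENNReal

noncomputable section

/-- The polar-defined measure associated with an angular measure `Φ` on the sphere:
`μ(B) = ∫_0^∞ Φ({θ ∈ S : rθ ∈ B}) r⁻² dr`. -/
def polarMeasure (d : ℕ) (Φ : Measure (Fin d → ℝ)) (B : Set (Fin d → ℝ)) : ℝ≥0∞ :=
  ∫⁻ r in Set.Ioi (0 : ℝ), Φ {θ | θ ∈ supSphere d ∧ r • θ ∈ B} / ENNReal.ofReal (r ^ 2)

/-- Framing-gap bound: if `D ⊆ [1,∞) × S` is a Borel set whose slices
`D_r = {θ ∈ S : (r,θ) ∈ D}` satisfy `Φ(D_r) ≤ a·r` for all `r ≥ 1`, with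
`0 < a ≤ Φ(S)`, then
`μ({x ∈ E : ‖x‖ ≥ 1, (‖x‖, x/‖x‖) ∈ D}) ≤ a·(1 + log(Φ(S)/a))`. -/
theorem polarMeasure_slice_bound (d : ℕ) (hd : 1 ≤ d)
    (Φ : Measure (Fin d → ℝ)) [IsFiniteMeasure Φ] (hΦpos : 0 < Φ (supSphere d))
    (D : Set (ℝ × (Fin d → ℝ))) (hD : MeasurableSet D)
    (hDsub : D ⊆ Set.Ici (1 : ℝ) ×ˢ supSphere d)
    (a : ℝ) (ha : 0 < a) (haS : a ≤ (Φ (supSphere d)).toReal)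
    (hslice : ∀ r : ℝ, 1 ≤ r →
      Φ {θ | θ ∈ supSphere d ∧ (r, θ) ∈ D} ≤ ENNReal.ofReal (a * r)) :
    polarMeasure d Φ {x | x ∈ Eorthant d ∧ 1 ≤ ‖x‖ ∧ (‖x‖, ‖x‖⁻¹ • x) ∈ D}
      ≤ ENNReal.ofReal (a * (1 + Real.log ((Φ (supSphere d)).toReal / a))) := by
  have hSne : Φ (supSphere d) ≠ ⊤ := measure_ne_top Φ _
  set M := (Φ (supSphere d)).toReal with hMdef
  have hMpos : 0 < M := lt_of_lt_of_le ha haS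
  set r₀ := M / a with hr₀def
  have hr₀1 : (1:ℝ) ≤ r₀ := (one_le_div ha).2 haS
  have hr₀pos : (0:ℝ) < r₀ := lt_of_lt_of_le zero_lt_one hr₀1
  set B := {x : Fin d → ℝ | x ∈ Eorthant d ∧ 1 ≤ ‖x‖ ∧ (‖x‖, ‖x‖⁻¹ • x) ∈ D} with hBdef
  have hnorm : ∀ (r : ℝ), 0 < r → ∀ θ ∈ supSphere d, ‖r • θ‖ = r := by
    intro r hr θ hθ
    rw [norm_smul, hθ.2, Real.norm_eq_abs, abs_of_pos hr, mul_one]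
  have hmem : ∀ (r : ℝ), 0 < r → ∀ θ ∈ supSphere d,
      (r • θ ∈ B ↔ 1 ≤ r ∧ (r, θ) ∈ D) := by
    intro r hr θ hθ
    have h1 : ‖r • θ‖ = r := hnorm r hr θ hθ
    have h2 : r⁻¹ • (r • θ) = θ := by
      rw [smul_smul, inv_mul_cancel₀ (ne_of_gt hr), one_smul]
    constructor
    · rintro ⟨_, hge, hD'⟩
      rw [h1] at hge; rw [h1, h2] at hD'
      exact ⟨hge, hD'⟩
    · rintro ⟨hge, hD'⟩
      refine ⟨⟨fun j => ?_, fun h0 => ?_⟩, ?_, ?_⟩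
      · simpa using mul_nonneg hr.le (hθ.1 j)
      · rw [h0, norm_zero] at h1; exact (ne_of_gt hr) h1.symm
      · rw [h1]; exact hge
      · rw [h1, h2]; exact hD'
  -- pointwise bound
  set g : ℝ → ℝ≥0∞ := fun r =>
    (Set.Icc 1 r₀).indicator (fun r => ENNReal.ofReal (a / r)) r
      + (Set.Ioi r₀).indicator (fun r => ENNReal.ofReal (M / r ^ 2)) r with hgdef
  have hgmeas : Measurable g := by
    apply Measurable.add
    · exact (measurable_const.div measurable_id').ennreal_ofReal.indicator measurableSet_Icc
    · exact (measurable_const.div (measurable_id'.pow_const 2)).ennreal_ofReal.indicator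
        measurableSet_Ioi
  have key : ∀ r ∈ Set.Ioi (0:ℝ),
      Φ {θ | θ ∈ supSphere d ∧ r • θ ∈ B} / ENNReal.ofReal (r ^ 2) ≤ g r := by
    intro r hr
    have hrpos : (0:ℝ) < r := hr
    by_cases hr1 : 1 ≤ r
    · have hset : {θ | θ ∈ supSphere d ∧ r • θ ∈ B} ⊆ {θ | θ ∈ supSphere d ∧ (r, θ) ∈ D} := by
        intro θ ⟨hθ, hB⟩
        exact ⟨hθ, ((hmem r hrpos θ hθ).1 hB).2⟩
      have hΦle : Φ {θ | θ ∈ supSphere d ∧ r • θ ∈ B} ≤ ENNReal.ofReal (a * r) :=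
        le_trans (measure_mono hset) (hslice r hr1)
      have hΦle2 : Φ {θ | θ ∈ supSphere d ∧ r • θ ∈ B} ≤ ENNReal.ofReal M := by
        rw [hMdef, ENNReal.ofReal_toReal hSne]
        exact measure_mono (fun θ hθ => hθ.1)
      by_cases hrr : r ≤ r₀
      · calc Φ {θ | θ ∈ supSphere d ∧ r • θ ∈ B} / ENNReal.ofReal (r ^ 2)
            ≤ ENNReal.ofReal (a * r) / ENNReal.ofReal (r ^ 2) :=
              ENNReal.div_le_div_right hΦle _
          _ = ENNReal.ofReal (a * r / r ^ 2) := by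
              rw [ENNReal.ofReal_div_of_pos (by positivity)]
          _ = ENNReal.ofReal (a / r) := by
              congr 1; field_simp
          _ ≤ g r := by
              rw [hgdef]
              have : r ∈ Set.Icc 1 r₀ := ⟨hr1, hrr⟩
              simp [Set.indicator_of_mem this]
      · calc Φ {θ | θ ∈ supSphere d ∧ r • θ ∈ B} / ENNReal.ofReal (r ^ 2)
            ≤ ENNReal.ofReal M / ENNReal.ofReal (r ^ 2) :=
              ENNReal.div_le_div_right hΦle2 _
          _ = ENNReal.ofReal (M / r ^ 2) := by
              rw [ENNReal.ofReal_div_of_pos (by positivity)]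
          _ ≤ g r := by
              rw [hgdef]
              have : r ∈ Set.Ioi r₀ := lt_of_not_ge hrr
              simp [Set.indicator_of_mem this]
    · have hset : {θ | θ ∈ supSphere d ∧ r • θ ∈ B} = ∅ := by
        ext θ
        simp only [Set.mem_setOf_eq, Set.mem_empty_iff_false, iff_false]
        rintro ⟨hθ, hB⟩
        exact hr1 ((hmem r hrpos θ hθ).1 hB).1
      rw [hset]
      simp
  calc polarMeasure d Φ B ≤ ∫⁻ r in Set.Ioi (0:ℝ), g r := by
        exact setLIntegral_mono hgmeas key
    _ = (∫⁻ r in Set.Ioi (0:ℝ),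
          (Set.Icc 1 r₀).indicator (fun r => ENNReal.ofReal (a / r)) r)
        + ∫⁻ r in Set.Ioi (0:ℝ),
          (Set.Ioi r₀).indicator (fun r => ENNReal.ofReal (M / r ^ 2)) r := by
        rw [hgdef]
        exact lintegral_add_left
          ((measurable_const.div measurable_id').ennreal_ofReal.indicator measurableSet_Icc) _
    _ = (∫⁻ r in Set.Icc 1 r₀, ENNReal.ofReal (a / r))
        + ∫⁻ r in Set.Ioi r₀, ENNReal.ofReal (M / r ^ 2) := by
        have e1 : Set.Icc (1:ℝ) r₀ ∩ Set.Ioi 0 = Set.Icc 1 r₀ :=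
          Set.inter_eq_left.2 (fun x hx => lt_of_lt_of_le zero_lt_one hx.1)
        have e2 : Set.Ioi r₀ ∩ Set.Ioi (0:ℝ) = Set.Ioi r₀ :=
          Set.inter_eq_left.2 (fun x hx => lt_trans hr₀pos hx)
        rw [lintegral_indicator measurableSet_Icc, lintegral_indicator measurableSet_Ioi,
          Measure.restrict_restrict measurableSet_Icc,
          Measure.restrict_restrict measurableSet_Ioi, e1, e2]
    _ ≤ ENNReal.ofReal (a * Real.log r₀) + ENNReal.ofReal a := by
        gcongr
        · -- first integral
          have hint : IntegrableOn (fun r => a / r) (Set.Icc 1 r₀) := by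
            apply ContinuousOn.integrableOn_Icc
            apply ContinuousOn.div continuousOn_const continuousOn_id
            intro x hx; exact ne_of_gt (lt_of_lt_of_le zero_lt_one hx.1)
          rw [← ofReal_integral_eq_lintegral_ofReal hint
            (ae_restrict_of_forall_mem measurableSet_Icc
              (fun r hr => div_nonneg ha.le (le_trans zero_le_one hr.1)))]
          apply ENNReal.ofReal_le_ofReal
          have h0 : (0:ℝ) ∉ Set.uIcc (1:ℝ) r₀ := by
            rw [Set.uIcc_of_le hr₀1]
            rintro ⟨h01, -⟩; norm_num at h01
          have hval : ∫ r in Set.Icc (1:ℝ) r₀, a / r = a * Real.log r₀ := by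
            rw [MeasureTheory.integral_Icc_eq_integral_Ioc,
              ← intervalIntegral.integral_of_le hr₀1]
            simp_rw [div_eq_mul_inv]
            rw [intervalIntegral.integral_const_mul, integral_inv h0, div_one]
          exact le_of_eq hval
        · -- second integral
          have heq : ∀ x : ℝ, 0 < x → M / x ^ 2 = M * x ^ (-2:ℝ) := by
            intro x hx
            rw [show ((-2:ℝ)) = -((2:ℕ):ℝ) by norm_num, Real.rpow_neg hx.le,
              Real.rpow_natCast, div_eq_mul_inv]
          have hbase : IntegrableOn (fun x : ℝ => M * x ^ (-2:ℝ)) (Set.Ioi r₀) :=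
            (integrableOn_Ioi_rpow_of_lt (by norm_num : (-2:ℝ) < -1) hr₀pos).const_mul M
          have hint2 : IntegrableOn (fun r => M / r ^ 2) (Set.Ioi r₀) :=
            hbase.congr_fun (fun x hx => (heq x (lt_trans hr₀pos hx)).symm)
              measurableSet_Ioi
          rw [← ofReal_integral_eq_lintegral_ofReal hint2
            (ae_restrict_of_forall_mem measurableSet_Ioi
              (fun r _ => div_nonneg hMpos.le (sq_nonneg r)))]
          apply ENNReal.ofReal_le_ofReal
          have hval2 : ∫ r in Set.Ioi r₀, M / r ^ 2 = a := by
            rw [setIntegral_congr_fun measurableSet_Ioi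
              (g := fun r : ℝ => M * r ^ (-2:ℝ))
              (fun x hx => heq x (lt_trans hr₀pos hx)),
              MeasureTheory.integral_const_mul,
              integral_Ioi_rpow_of_lt (by norm_num : (-2:ℝ) < -1) hr₀pos]
            rw [show (-2:ℝ) + 1 = -1 by norm_num, Real.rpow_neg_one, hr₀def]
            field_simp
          exact le_of_eq hval2
    _ ≤ ENNReal.ofReal (a * (1 + Real.log (M / a))) := by
        rw [← ENNReal.ofReal_add (mul_nonneg ha.le (Real.log_nonneg hr₀1)) ha.le]
        apply ENNReal.ofReal_le_ofReal
        rw [← hr₀def]; nlinarith [Real.log_nonneg hr₀1]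
end
end

section
/- Let n, k, Δ, x be real numbers with n > 0, k > 0, Δ > 0, x ≥ 1, kΔ ≥ 2 and 3kΔx ≤ n. Then for both σ = +1 and σ = −1, the denominator n/x + σkΔ + 1 is positive and |(n+1)/(n/x + σkΔ + 1) − x| ≤ (3/2)·(kΔ/n)·x². -/
/-- Deterministic perturbation estimate at the heart of the angular-framing step.
Let `n, k, Δ, x` be real numbers with `n > 0`, `k > 0`, `Δ > 0`, `x ≥ 1`, `kΔ ≥ 2`
and `3kΔx ≤ n`.  Then for both `σ = +1` and `σ = −1`, the denominator
`n/x + σkΔ + 1` is positive and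
`|(n+1)/(n/x + σkΔ + 1) − x| ≤ (3/2)·(kΔ/n)·x²`. -/
theorem rank_perturbation_estimate (n k Δ x : ℝ)
    (hn : 0 < n) (hk : 0 < k) (hΔ : 0 < Δ) (hx : 1 ≤ x)
    (hkΔ : 2 ≤ k * Δ) (h3 : 3 * (k * Δ) * x ≤ n) :
    ∀ σ : ℝ, (σ = 1 ∨ σ = -1) →
      0 < n / x + σ * (k * Δ) + 1 ∧
      |(n + 1) / (n / x + σ * (k * Δ) + 1) - x| ≤ 3 / 2 * (k * Δ / n) * x ^ 2 := by
  intro σ hσ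
  have hx0 : (0 : ℝ) < x := by linarith
  have hD : (0 : ℝ) < k * Δ := by linarith
  have hnx : 3 * (k * Δ) ≤ n / x := by
    rw [le_div_iff₀ hx0]; linarith
  have hq : k * Δ / n * x ≤ 1 / 3 := by
    rw [div_mul_eq_mul_div, div_le_iff₀ hn]; linarith
  rcases hσ with rfl | rfl
  · have hden : 0 < n / x + 1 * (k * Δ) + 1 := by positivity
    refine ⟨hden, ?_⟩
    have e : (n + 1) / (n / x + 1 * (k * Δ) + 1) - x
        = (1 - x - k * Δ * x) / (n / x + 1 * (k * Δ) + 1) := by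
      have hne : n + x * (1 * (k * Δ)) + x ≠ 0 := by positivity
      field_simp
      ring
    rw [e, abs_div, abs_of_pos hden, div_le_iff₀ hden,
      abs_of_nonpos (by nlinarith : 1 - x - k * Δ * x ≤ 0)]
    have key : 3 / 2 * (k * Δ / n) * x ^ 2 * (n / x + 1 * (k * Δ) + 1)
        = 3 / 2 * (k * Δ) * x + 3 / 2 * (k * Δ / n) * x ^ 2 * (k * Δ + 1) := by
      field_simp
      ring
    rw [key]
    have hpos : 0 ≤ 3 / 2 * (k * Δ / n) * x ^ 2 * (k * Δ + 1) := by positivity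
    nlinarith
  · have hden : 0 < n / x + -1 * (k * Δ) + 1 := by nlinarith
    refine ⟨hden, ?_⟩
    have e : (n + 1) / (n / x + -1 * (k * Δ) + 1) - x
        = (1 - x + k * Δ * x) / (n / x + -1 * (k * Δ) + 1) := by
      rw [eq_div_iff hden.ne', sub_mul, div_mul_cancel₀ _ hden.ne',
        mul_add, mul_add, mul_div_cancel₀ _ hx0.ne']
      ring
    rw [e, abs_div, abs_of_pos hden, div_le_iff₀ hden,
      abs_of_nonneg (by nlinarith : 0 ≤ 1 - x + k * Δ * x)]
    have key : 3 / 2 * (k * Δ / n) * x ^ 2 * (n / x + -1 * (k * Δ) + 1)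
        = 3 / 2 * (k * Δ) * x - 3 / 2 * ((k * Δ / n * x) * (x * (k * Δ - 1))) := by
      field_simp
      ring
    rw [key]
    have hb : (k * Δ / n * x) * (x * (k * Δ - 1)) ≤ (1 / 3) * (x * (k * Δ - 1)) := by
      apply mul_le_mul_of_nonneg_right hq
      have : 0 ≤ k * Δ - 1 := by linarith
      positivity
    nlinarith
end

section
/- Let d ≥ 1. On a probability space, let R be a random variable with P(R > t) = 1/t for all t ≥ 1 and R ≥ 1 almost surely (unit-Pareto), and let Θ_j be a random variable with 0 ≤ Θ_j ≤ 1 almost surely and E[Θ_j] = 1/d, independent of R. Then for every real x ≥ 1, P(R·Θ_j > x) = 1/(d·x). Consequently, if X_j = R·Θ_j has cdf F_j, then 1/(1 − F_j(u)) = d·u for all u ≥ 1. -/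
open MeasureTheory ProbabilityTheory ENNReal

/-- Simulation model, part (i):  `R` unit-Pareto (`P(R > t) = 1/t` for `t ≥ 1`, `R ≥ 1` a.s.),
`Θ_j ∈ [0,1]` a.s. with `E[Θ_j] = 1/d`, independent of `R`.  Then
`P(R·Θ_j > x) = 1/(d·x)` for every `x ≥ 1`, and consequently the cdf `F_j` of
`X_j = R·Θ_j` satisfies `1/(1 − F_j(u)) = d·u` for all `u ≥ 1`. -/
theorem pareto_dirichlet_margin (d : ℕ) (hd : 1 ≤ d)
    {Ω : Type*} [MeasurableSpace Ω] (P : Measure Ω) [IsProbabilityMeasure P]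
    (R Θ : Ω → ℝ) (hR : Measurable R) (hΘ : Measurable Θ)
    (hindep : IndepFun R Θ P)
    (hPareto : ∀ t : ℝ, 1 ≤ t → P {ω | t < R ω} = ENNReal.ofReal (1 / t))
    (hR1 : ∀ᵐ ω ∂P, 1 ≤ R ω)
    (hΘ01 : ∀ᵐ ω ∂P, Θ ω ∈ Set.Icc (0 : ℝ) 1)
    (hmean : ∫ ω, Θ ω ∂P = 1 / d) :
    (∀ x : ℝ, 1 ≤ x → P {ω | x < R ω * Θ ω} = ENNReal.ofReal (1 / (d * x))) ∧
    (∀ u : ℝ, 1 ≤ u → 1 / (1 - (P {ω | R ω * Θ ω ≤ u}).toReal) = d * u) := by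
  have hd1 : (1:ℝ) ≤ (d:ℝ) := by exact_mod_cast hd
  have hdpos : (0:ℝ) < (d:ℝ) := lt_of_lt_of_le one_pos hd1
  have hmain : ∀ x : ℝ, 1 ≤ x → P {ω | x < R ω * Θ ω} = ENNReal.ofReal (1 / (d * x)) := by
    intro x hx
    have hxpos : (0:ℝ) < x := lt_of_lt_of_le one_pos hx
    have hmap : P.map (fun ω => (R ω, Θ ω)) = (P.map R).prod (P.map Θ) :=
      (indepFun_iff_map_prod_eq_prod_map_map hR.aemeasurable hΘ.aemeasurable).mp hindep
    set μ := P.map R with hμ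
    set ν := P.map Θ with hν
    have hS : MeasurableSet {p : ℝ × ℝ | x < p.1 * p.2} :=
      measurableSet_lt measurable_const (measurable_fst.mul measurable_snd)
    have h1 : P {ω | x < R ω * Θ ω} = (μ.prod ν) {p : ℝ × ℝ | x < p.1 * p.2} := by
      rw [← hmap, Measure.map_apply (hR.prodMk hΘ) hS]
      rfl
    rw [h1, Measure.prod_apply_symm hS]
    have hν01 : ∀ᵐ θ ∂ν, θ ∈ Set.Icc (0:ℝ) 1 :=
      (ae_map_iff hΘ.aemeasurable measurableSet_Icc).mpr hΘ01
    have key : ∀ᵐ θ ∂ν, μ {r | x < r * θ}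
        = ENNReal.ofReal θ * ENNReal.ofReal (1 / x) := by
      filter_upwards [hν01] with θ hθ
      rcases eq_or_lt_of_le hθ.1 with h0 | h0
      · have he : {r : ℝ | x < r * θ} = ∅ := by
          ext r
          simp only [Set.mem_setOf_eq, Set.mem_empty_iff_false, iff_false, not_lt, ← h0,
            mul_zero]
          exact hxpos.le
        rw [he]
        simp [← h0]
      · have hset : {r : ℝ | x < r * θ} = Set.Ioi (x / θ) := by
          ext r
          simp only [Set.mem_setOf_eq, Set.mem_Ioi, div_lt_iff₀ h0]
        have h1xθ : 1 ≤ x / θ := (one_le_div h0).mpr (hθ.2.trans hx)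
        have hμIoi : μ (Set.Ioi (x / θ)) = P {ω | x / θ < R ω} := by
          rw [hμ, Measure.map_apply hR measurableSet_Ioi]
          rfl
        rw [hset, hμIoi, hPareto _ h1xθ, one_div_div, div_eq_mul_one_div,
          ENNReal.ofReal_mul h0.le]
    simp only [Set.preimage_setOf_eq]
    rw [lintegral_congr_ae key, lintegral_mul_const _ ENNReal.measurable_ofReal]
    have hint : Integrable Θ P := by
      refine Integrable.mono' (integrable_const (1:ℝ)) hΘ.aestronglyMeasurable ?_
      filter_upwards [hΘ01] with ω hω
      rw [Real.norm_eq_abs, abs_le]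
      exact ⟨le_trans (by norm_num) hω.1, hω.2⟩
    have hΘnn : 0 ≤ᵐ[P] Θ := by filter_upwards [hΘ01] with ω hω; exact hω.1
    have hlin : ∫⁻ θ, ENNReal.ofReal θ ∂ν = ENNReal.ofReal (1 / d) := by
      rw [hν, lintegral_map ENNReal.measurable_ofReal hΘ,
        ← ofReal_integral_eq_lintegral_ofReal hint hΘnn, hmean]
    rw [hlin, ← ENNReal.ofReal_mul (by positivity), one_div_mul_one_div]
  refine ⟨hmain, fun u hu => ?_⟩
  have hupos : (0:ℝ) < u := lt_of_lt_of_le one_pos hu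
  have hdu : (0:ℝ) < (d:ℝ) * u := by positivity
  have hdu1 : (1:ℝ) ≤ (d:ℝ) * u := by nlinarith
  have hcompl : {ω | R ω * Θ ω ≤ u} = {ω | u < R ω * Θ ω}ᶜ := by
    ext ω; simp [not_lt]
  have hmeas : MeasurableSet {ω | u < R ω * Θ ω} :=
    measurableSet_lt measurable_const (hR.mul hΘ)
  rw [hcompl, prob_compl_eq_one_sub hmeas, hmain u hu]
  have hle : ENNReal.ofReal (1 / ((d:ℝ) * u)) ≤ 1 := by
    rw [ENNReal.ofReal_le_one, div_le_one hdu]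
    exact hdu1
  rw [ENNReal.toReal_sub_of_le hle ENNReal.one_ne_top, ENNReal.toReal_one,
    ENNReal.toReal_ofReal (by positivity)]
  have : (1:ℝ) - (1 - 1 / ((d:ℝ) * u)) = 1 / ((d:ℝ) * u) := by ring
  rw [this, one_div_one_div]
end

section
/- Let d ≥ 1. On a probability space, let R be unit-Pareto (P(R > t) = 1/t for all t ≥ 1, R ≥ 1 a.s.) and let Θ = (Θ_1, …, Θ_d) be a random vector, independent of R, supported on the unit simplex (Θ_j ≥ 0 and Θ_1 + ⋯ + Θ_d = 1 a.s.) with E[Θ_j] = 1/d for every j. Set X = RΘ, let F_j be the cdf of X_j, and V_j = 1/(1 − F_j(X_j)). Then for every x ∈ (0,∞)^d and every t > d / min_{j} x_j, t · P(∃ j ∈ {1,…,d} : V_j > t·x_j) = d · E[max_{j=1,…,d} Θ_j / x_j]. -/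
open MeasureTheory ProbabilityTheory ENNReal

/-- Key computation: if `R` is unit-Pareto, `G` is independent of `R` with
`0 ≤ G ≤ c` a.s. and `c > 0`, then `P(R·G > c) = E[G]/c`. -/
private lemma pareto_mul_tail {Ω : Type*} [MeasurableSpace Ω] (P : Measure Ω)
    [IsProbabilityMeasure P]
    (R G : Ω → ℝ) (hR : Measurable R) (hG : Measurable G)
    (hind : IndepFun R G P)
    (hPareto : ∀ t : ℝ, 1 ≤ t → P {ω | t < R ω} = ENNReal.ofReal (1 / t))
    (c : ℝ) (hc : 0 < c) (hGc : ∀ᵐ ω ∂P, 0 ≤ G ω ∧ G ω ≤ c) :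
    P {ω | c < R ω * G ω} = ENNReal.ofReal ((∫ ω, G ω ∂P) / c) := by
  have hS : MeasurableSet {p : ℝ × ℝ | c < p.2 * p.1} :=
    measurableSet_lt measurable_const (measurable_snd.mul measurable_fst)
  have hmap : Measure.map (fun ω => (G ω, R ω)) P = (P.map G).prod (P.map R) :=
    (indepFun_iff_map_prod_eq_prod_map_map hG.aemeasurable hR.aemeasurable).mp hind.symm
  have h1 : P {ω | c < R ω * G ω}
      = ((P.map G).prod (P.map R)) {p : ℝ × ℝ | c < p.2 * p.1} := by
    rw [← hmap, Measure.map_apply (hG.prodMk hR) hS]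
    rfl
  have hae : ∀ᵐ s ∂(P.map G), 0 ≤ s ∧ s ≤ c := by
    rw [MeasureTheory.ae_map_iff hG.aemeasurable
      (show MeasurableSet {s : ℝ | 0 ≤ s ∧ s ≤ c} from
        (measurableSet_le measurable_const measurable_id).inter
        (measurableSet_le measurable_id measurable_const))]
    exact hGc
  have hpt : ∀ᵐ s ∂(P.map G),
      (P.map R) (Prod.mk s ⁻¹' {p : ℝ × ℝ | c < p.2 * p.1}) = ENNReal.ofReal (s / c) := by
    filter_upwards [hae] with s hs
    have hpre : Prod.mk s ⁻¹' {p : ℝ × ℝ | c < p.2 * p.1} = {r : ℝ | c < r * s} := rfl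
    rw [hpre]
    rcases eq_or_lt_of_le hs.1 with h0 | h0
    · have hempty : {r : ℝ | c < r * s} = ∅ := by
        ext r; simp [← h0, not_lt.2 hc.le]
      rw [hempty, ← h0, measure_empty, zero_div, ENNReal.ofReal_zero]
    · have hset : {r : ℝ | c < r * s} = {r : ℝ | c / s < r} := by
        ext r; exact (div_lt_iff₀ h0).symm
      have hmap2 : (Measure.map R P) {r : ℝ | c / s < r} = P {ω | c / s < R ω} :=
        Measure.map_apply hR measurableSet_Ioi
      rw [hset, hmap2, hPareto _ ((one_le_div h0).2 hs.2), one_div_div]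
  have hint : Integrable G P := by
    refine Integrable.mono' (integrable_const c) hG.aestronglyMeasurable ?_
    filter_upwards [hGc] with ω h
    rw [Real.norm_eq_abs, abs_of_nonneg h.1]; exact h.2
  have hnn : 0 ≤ᵐ[P] G := by filter_upwards [hGc] with ω h; exact h.1
  have hEnn : 0 ≤ ∫ ω, G ω ∂P := integral_nonneg_of_ae hnn
  rw [h1, Measure.prod_apply hS, lintegral_congr_ae hpt]
  simp_rw [ENNReal.ofReal_div_of_pos hc, div_eq_mul_inv]
  rw [lintegral_mul_const _ ENNReal.measurable_ofReal,
    lintegral_map ENNReal.measurable_ofReal hG,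
    ← ofReal_integral_eq_lintegral_ofReal hint hnn]

/-- Pre-asymptotic exactness in the simulation model `X = RΘ`:
`R` unit-Pareto, `Θ` on the unit simplex with `E[Θ_j] = 1/d`, independent of `R`;
`F_j` is the cdf of `X_j = R·Θ_j` and `V_j = 1/(1 − F_j(X_j))`.  Then for every
`x ∈ (0,∞)^d` and every `t > d / min_j x_j` (i.e. `t > d/x_j` for all `j`),
`t · P(∃ j : V_j > t·x_j) = d · E[max_j Θ_j / x_j]`. -/
theorem pareto_dirichlet_tail_identity (d : ℕ) (hd : 1 ≤ d)
    {Ω : Type*} [MeasurableSpace Ω] (P : Measure Ω) [IsProbabilityMeasure P]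
    (R : Ω → ℝ) (Θ : Ω → Fin d → ℝ) (hR : Measurable R) (hΘ : Measurable Θ)
    (hindep : IndepFun R Θ P)
    (hPareto : ∀ t : ℝ, 1 ≤ t → P {ω | t < R ω} = ENNReal.ofReal (1 / t))
    (hR1 : ∀ᵐ ω ∂P, 1 ≤ R ω)
    (hsimplex : ∀ᵐ ω ∂P, (∀ j, 0 ≤ Θ ω j) ∧ ∑ j, Θ ω j = 1)
    (hmean : ∀ j, ∫ ω, Θ ω j ∂P = 1 / d)
    (F : Fin d → ℝ → ℝ)
    (hF : ∀ j u, F j u = (P {ω | R ω * Θ ω j ≤ u}).toReal)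
    (V : Ω → Fin d → ℝ)
    (hV : ∀ ω j, V ω j = (1 - F j (R ω * Θ ω j))⁻¹)
    (x : Fin d → ℝ) (hx : ∀ j, 0 < x j)
    (t : ℝ) (ht : ∀ j, d / x j < t) :
    t * (P {ω | ∃ j, t * x j < V ω j}).toReal
      = d * ∫ ω, (⨆ j, Θ ω j / x j) ∂P := by
  haveI : Nonempty (Fin d) := ⟨⟨0, hd⟩⟩
  obtain ⟨j0⟩ := (inferInstance : Nonempty (Fin d))
  have hd1 : (1:ℝ) ≤ d := by exact_mod_cast hd
  have hd0 : (0:ℝ) < d := by linarith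
  have ht0 : 0 < t := lt_trans (div_pos hd0 (hx j0)) (ht j0)
  have hΘmeas : ∀ j, Measurable fun ω => Θ ω j := fun j => (measurable_pi_apply j).comp hΘ
  have hΘj : ∀ᵐ ω ∂P, ∀ j, 0 ≤ Θ ω j ∧ Θ ω j ≤ 1 := by
    filter_upwards [hsimplex] with ω hω j
    refine ⟨hω.1 j, ?_⟩
    calc Θ ω j ≤ ∑ i, Θ ω i :=
          Finset.single_le_sum (fun i _ => hω.1 i) (Finset.mem_univ j)
      _ = 1 := hω.2
  -- Step A: the tail of X_j and the cdf F_j above level 1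
  have htail : ∀ (j : Fin d) (u : ℝ), 1 ≤ u →
      P {ω | u < R ω * Θ ω j} = ENNReal.ofReal (1 / (d * u)) := by
    intro j u hu
    have hind : IndepFun R (fun ω => Θ ω j) P :=
      hindep.comp measurable_id (measurable_pi_apply j)
    have := pareto_mul_tail P R (fun ω => Θ ω j) hR (hΘmeas j) hind hPareto u
      (lt_of_lt_of_le one_pos hu)
      (by filter_upwards [hΘj] with ω h; exact ⟨(h j).1, le_trans (h j).2 hu⟩)
    rw [this, hmean j, div_div]
  have hF1 : ∀ (j : Fin d) (u : ℝ), 1 ≤ u → F j u = 1 - 1 / (d * u) := by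
    intro j u hu
    have hms : MeasurableSet {ω | u < R ω * Θ ω j} :=
      measurableSet_lt measurable_const (hR.mul (hΘmeas j))
    have hcompl : {ω | R ω * Θ ω j ≤ u} = {ω | u < R ω * Θ ω j}ᶜ := by
      ext ω; simp [not_lt]
    have hle1 : ENNReal.ofReal (1 / (d * u)) ≤ 1 := by
      apply ENNReal.ofReal_le_one.mpr
      rw [div_le_one (by positivity)]
      nlinarith
    rw [hF, hcompl, measure_compl hms (measure_ne_top P _), measure_univ, htail j u hu,
      ENNReal.toReal_sub_of_le hle1 one_ne_top, ENNReal.toReal_one,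
      ENNReal.toReal_ofReal (by positivity)]
  have hFmono : ∀ (j : Fin d) (u v : ℝ), u ≤ v → F j u ≤ F j v := by
    intro j u v huv
    rw [hF, hF]
    exact ENNReal.toReal_mono (measure_ne_top P _)
      (measure_mono fun ω h => le_trans h huv)
  -- Step B: a.e. rewriting of the event
  have hevent : {ω | ∃ j, t * x j < V ω j}
      =ᵐ[P] {ω | t / d < R ω * ⨆ j, Θ ω j / x j} := by
    filter_upwards [hR1, hΘj] with ω hRω hΘω
    have hR0 : (0:ℝ) ≤ R ω := le_trans zero_le_one hRω
    have key1 : ∀ j, (t * x j < V ω j ↔ t / d < R ω * (Θ ω j / x j)) := by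
      intro j
      have hxj := hx j
      have htxj : d < t * x j := (div_lt_iff₀ hxj).mp (ht j)
      set v := R ω * Θ ω j with hv
      have hv0 : 0 ≤ v := mul_nonneg hR0 (hΘω j).1
      have hRHS : t / d < R ω * (Θ ω j / x j) ↔ t * x j < v * d := by
        rw [← mul_div_assoc, ← hv, div_lt_div_iff₀ hd0 hxj]
      by_cases h1v : 1 ≤ v
      · have hFv : F j v = 1 - 1 / (d * v) := hF1 j v h1v
        have hv0' : 0 < v := lt_of_lt_of_le one_pos h1v
        have hVv : V ω j = d * v := by
          rw [hV, hFv]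
          have : (1:ℝ) - (1 - 1 / (d * v)) = 1 / (d * v) := by ring
          rw [this, one_div, inv_inv]
        rw [hVv, hRHS]
        constructor <;> intro h <;> nlinarith
      · push_neg at h1v
        constructor
        · intro h
          exfalso
          have hF1v : F j v ≤ F j 1 := hFmono j v 1 h1v.le
          have hFj1 : F j 1 = 1 - 1 / d := by
            have := hF1 j 1 le_rfl
            rwa [mul_one] at this
          have hpos : (1:ℝ) / d ≤ 1 - F j v := by rw [hFj1] at hF1v; linarith
          have hVle : V ω j ≤ d := by
            rw [hV, ← hv]
            calc (1 - F j v)⁻¹ ≤ ((1:ℝ) / d)⁻¹ := by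
                  apply inv_anti₀ (by positivity) hpos
              _ = d := by rw [one_div, inv_inv]
          linarith
        · intro h
          exfalso
          rw [hRHS] at h
          nlinarith
    have hbdd : BddAbove (Set.range fun i => Θ ω i / x i) :=
      Set.Finite.bddAbove (Set.finite_range _)
    rw [eq_iff_iff]
    constructor
    · rintro ⟨j, hj⟩
      calc t / d < R ω * (Θ ω j / x j) := (key1 j).mp hj
        _ ≤ R ω * ⨆ i, Θ ω i / x i :=
            mul_le_mul_of_nonneg_left (le_ciSup hbdd j) hR0
    · intro h
      obtain ⟨j, hj⟩ := Finite.exists_max fun i => Θ ω i / x i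
      have hsup : (⨆ i, Θ ω i / x i) ≤ Θ ω j / x j := ciSup_le hj
      refine ⟨j, (key1 j).mpr ?_⟩
      calc t / d < R ω * ⨆ i, Θ ω i / x i := h
        _ ≤ R ω * (Θ ω j / x j) := mul_le_mul_of_nonneg_left hsup hR0
  -- Step C: compute the probability via the key lemma
  have hg : Measurable fun v : Fin d → ℝ => ⨆ j, v j / x j :=
    Measurable.iSup fun j => (measurable_pi_apply j).div measurable_const
  have hG : Measurable fun ω => ⨆ j, Θ ω j / x j := hg.comp hΘ
  have hindG : IndepFun R (fun ω => ⨆ j, Θ ω j / x j) P := hindep.comp measurable_id hg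
  have hc : 0 < t / d := div_pos ht0 hd0
  have hGc : ∀ᵐ ω ∂P, 0 ≤ (⨆ j, Θ ω j / x j) ∧ (⨆ j, Θ ω j / x j) ≤ t / d := by
    filter_upwards [hΘj] with ω hω
    have hbdd : BddAbove (Set.range fun i => Θ ω i / x i) :=
      Set.Finite.bddAbove (Set.finite_range _)
    constructor
    · exact le_trans (div_nonneg (hω j0).1 (hx j0).le) (le_ciSup hbdd j0)
    · apply ciSup_le
      intro j
      have h1 : Θ ω j / x j ≤ 1 / x j := by
        gcongr
        · exact (hx j).le
        · exact (hω j).2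
      have h2 : 1 / x j ≤ t / d := by
        rw [div_le_div_iff₀ (hx j) hd0, one_mul]
        have := (div_lt_iff₀ (hx j)).mp (ht j)
        linarith
      exact le_trans h1 h2
  have hP := pareto_mul_tail P R _ hR hG hindG hPareto (t / d) hc hGc
  rw [measure_congr hevent, hP]
  have hEnn : 0 ≤ ∫ ω, (⨆ j, Θ ω j / x j) ∂P := by
    apply integral_nonneg_of_ae
    filter_upwards [hGc] with ω h
    exact h.1
  rw [ENNReal.toReal_ofReal (by positivity)]
  field_simp
end
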